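/- arXiv:2603.22143 — 2 statements merged into one kernel-verified Lean document; each statement's English description precedes it below -/
import Mathlib

section
/- Let f(n) ∈ 𝒵[n] be a polynomial. Suppose property (v) holds for f: for every action of (𝒵,+) by measure-preserving transformations T(n) on a probability space (X, μ), every measurable A ⊆ X, and every ε > 0, there exist m, k ∈ 𝒵 with m ≠ 0 such that for every Følner sequence (Φ_N) in 𝒵, lim_{N→∞} (1/|Φ_N|) Σ_{n∈Φ_N} μ(A ∩ T(−f(mn+k))A) exists and is greater than μ(A)² − ε. Then for every finite partition 𝒵 = C₁ ∪ … ∪ C_r there exist i ∈ {1,…,r} and x, y, z ∈ C_i with x − y = f(z). -/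
open Filter Polynomial MeasureTheory
open scoped symmDiff Classical

noncomputable section

/-- A Følner sequence in a (countable discrete) abelian group. -/
def IsFolner {G : Type*} [AddCommGroup G] (Φ : ℕ → Finset G) : Prop :=
  (∀ N, (Φ N).Nonempty) ∧
    ∀ g : G, Tendsto
      (fun N => ((((Φ N).image (· + g)) ∆ (Φ N)).card : ℝ) / ((Φ N).card : ℝ))
      atTop (nhds 0)

/-- Property (v): for every measure-preserving action of `(𝒵,+)` on a probability space, every
measurable set `A` and every `ε > 0`, there exist `m ≠ 0` and `k` in `𝒵` such that along every
Følner sequence the averages of `μ(A ∩ T(−f(mn+k))A)` converge to a limit `> μ(A)² − ε`. -/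
def PropV {F : Type*} [Field F] (f : Polynomial (Polynomial F)) : Prop :=
  ∀ (X : Type) [MeasurableSpace X] (μ : Measure X) [IsProbabilityMeasure μ]
    (T : Polynomial F → X → X),
    (∀ n : Polynomial F, Measurable (T n)) →
    T 0 = id →
    (∀ m n : Polynomial F, T (m + n) = T m ∘ T n) →
    (∀ n : Polynomial F, MeasurePreserving (T n) μ μ) →
    ∀ A : Set X, MeasurableSet A → ∀ ε : ℝ, 0 < ε →
      ∃ m k : Polynomial F, m ≠ 0 ∧
        ∀ Φ : ℕ → Finset (Polynomial F), IsFolner Φ →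
          ∃ L : ℝ,
            Tendsto
              (fun N => (∑ n ∈ Φ N,
                  (μ (A ∩ (T (-(f.eval (m * n + k))) '' A))).toReal) / ((Φ N).card : ℝ))
              atTop (nhds L) ∧
            L > (μ A).toReal ^ 2 - ε

namespace PVPAux

/-- The length-`n` cylinder set in `ℕ → Bool` with pattern `s`. -/
def cylSet (n : ℕ) (s : Fin n → Bool) : Set (ℕ → Bool) :=
  {y | ∀ i : Fin n, y (i : ℕ) = s i}

lemma measurableSet_cylSet (n : ℕ) (s : Fin n → Bool) : MeasurableSet (cylSet n s) := by
  have : cylSet n s = ⋂ i : Fin n, ((fun y : ℕ → Bool => y (i : ℕ)) ⁻¹' {s i}) := by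
    ext y; simp [cylSet]
  rw [this]
  exact MeasurableSet.iInter fun i => (measurable_pi_apply _) (measurableSet_singleton _)

section Tree

variable (q : ∀ n, (Fin n → Bool) → ℝ)

/-- Left endpoint of the interval attached to a pattern. -/
def lep : ∀ n, (Fin n → Bool) → ℝ
  | 0, _ => 0
  | (n+1), t => lep n (Fin.init t) +
      (if t (Fin.last n) then q (n+1) (Fin.snoc (Fin.init t) false) else 0)

lemma lep_snoc_false (n : ℕ) (s : Fin n → Bool) :
    lep q (n+1) (Fin.snoc s false) = lep q n s := by
  simp [lep, Fin.init_snoc, Fin.snoc_last]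

lemma lep_snoc_true (n : ℕ) (s : Fin n → Bool) :
    lep q (n+1) (Fin.snoc s true) = lep q n s + q (n+1) (Fin.snoc s false) := by
  simp [lep, Fin.init_snoc, Fin.snoc_last]

/-- The interval attached to a pattern. -/
def itv (n : ℕ) (s : Fin n → Bool) : Set ℝ :=
  Set.Ico (lep q n s) (lep q n s + q n s)

lemma mem_itv {x : ℝ} {n : ℕ} {s : Fin n → Bool} :
    x ∈ itv q n s ↔ lep q n s ≤ x ∧ x < lep q n s + q n s := Iff.rfl

lemma itv_subset (hq0 : ∀ n s, 0 ≤ q n s)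
    (hadd : ∀ n s, q (n+1) (Fin.snoc s false) + q (n+1) (Fin.snoc s true) = q n s)
    (n : ℕ) (s : Fin n → Bool) (b : Bool) :
    itv q (n+1) (Fin.snoc s b) ⊆ itv q n s := by
  have h := hadd n s
  cases b
  · rw [itv, itv, lep_snoc_false]
    apply Set.Ico_subset_Ico le_rfl
    have := hq0 (n+1) (Fin.snoc s true)
    linarith
  · rw [itv, itv, lep_snoc_true]
    apply Set.Ico_subset_Ico
    · have := hq0 (n+1) (Fin.snoc s false); linarith
    · linarith

lemma itv_subset_unit (hq0 : ∀ n s, 0 ≤ q n s) (hq1 : ∀ s, q 0 s = 1)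
    (hadd : ∀ n s, q (n+1) (Fin.snoc s false) + q (n+1) (Fin.snoc s true) = q n s)
    (n : ℕ) (s : Fin n → Bool) : itv q n s ⊆ Set.Ico (0:ℝ) 1 := by
  induction n with
  | zero => rw [itv]; simp [lep, hq1]
  | succ n ih =>
      intro x hx
      have h1 : x ∈ itv q (n+1) (Fin.snoc (Fin.init s) (s (Fin.last n))) := by
        rwa [Fin.snoc_init_self]
      exact ih (Fin.init s) (itv_subset q hq0 hadd n _ _ h1)

/-- The coding map: pattern of length `n` containing `x`. -/
def code (x : ℝ) : ∀ n, Fin n → Bool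
  | 0 => fun i => i.elim0
  | (n+1) => Fin.snoc (code x n)
      (if lep q n (code x n) + q (n+1) (Fin.snoc (code x n) false) ≤ x then true else false)

lemma mem_itv_code (hq0 : ∀ n s, 0 ≤ q n s) (hq1 : ∀ s, q 0 s = 1)
    (hadd : ∀ n s, q (n+1) (Fin.snoc s false) + q (n+1) (Fin.snoc s true) = q n s)
    {x : ℝ} (hx : x ∈ Set.Ico (0:ℝ) 1) (n : ℕ) :
    x ∈ itv q n (code q x n) := by
  induction n with
  | zero =>
      rw [mem_itv]
      simp only [lep, hq1]
      exact ⟨hx.1, by simpa using hx.2⟩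
  | succ n ih =>
      rw [code]
      set s := code q x n with hs
      by_cases h : lep q n s + q (n+1) (Fin.snoc s false) ≤ x
      · simp only [h, if_true]
        rw [mem_itv, lep_snoc_true]
        have h2 := hadd n s
        have h3 := (mem_itv q).mp ih
        exact ⟨h, by linarith [h3.2]⟩
      · simp only [h, if_false]
        rw [mem_itv, lep_snoc_false]
        have h3 := (mem_itv q).mp ih
        push_neg at h
        exact ⟨h3.1, h⟩

lemma code_unique (hq0 : ∀ n s, 0 ≤ q n s)
    (hadd : ∀ n s, q (n+1) (Fin.snoc s false) + q (n+1) (Fin.snoc s true) = q n s)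
    {x : ℝ} (hx : x ∈ Set.Ico (0:ℝ) 1) :
    ∀ (n : ℕ) (t : Fin n → Bool), x ∈ itv q n t → code q x n = t := by
  intro n
  induction n with
  | zero => intro t _; exact Subsingleton.elim _ _
  | succ n ih =>
      intro t ht
      have hinit : x ∈ itv q n (Fin.init t) := by
        have : x ∈ itv q (n+1) (Fin.snoc (Fin.init t) (t (Fin.last n))) := by
          rwa [Fin.snoc_init_self]
        exact itv_subset q hq0 hadd n _ _ this
      have hcode : code q x n = Fin.init t := ih _ hinit
      rw [code, hcode]
      rcases hb : t (Fin.last n) with _ | _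
      · -- last bit false
        have hxlt : x < lep q n (Fin.init t) + q (n+1) (Fin.snoc (Fin.init t) false) := by
          have h2 := ((mem_itv q).mp ht).2
          have he : lep q (n+1) t = lep q n (Fin.init t) := by
            conv_lhs => rw [← Fin.snoc_init_self t, hb]
            exact lep_snoc_false q n _
          have he2 : q (n+1) t = q (n+1) (Fin.snoc (Fin.init t) false) := by
            conv_lhs => rw [← Fin.snoc_init_self t, hb]
          rw [he, he2] at h2
          exact h2
        rw [if_neg (not_le.mpr hxlt)]
        conv_rhs => rw [← Fin.snoc_init_self t, hb]
      · -- last bit true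
        have hxge : lep q n (Fin.init t) + q (n+1) (Fin.snoc (Fin.init t) false) ≤ x := by
          have h1 := ((mem_itv q).mp ht).1
          have he : lep q (n+1) t
              = lep q n (Fin.init t) + q (n+1) (Fin.snoc (Fin.init t) false) := by
            conv_lhs => rw [← Fin.snoc_init_self t, hb]
            exact lep_snoc_true q n _
          rw [he] at h1
          exact h1
        rw [if_pos hxge]
        conv_rhs => rw [← Fin.snoc_init_self t, hb]

/-- The encoding map `[0,1) → (ℕ → Bool)`. -/
def enc (x : ℝ) (l : ℕ) : Bool := code q x (l+1) (Fin.last l)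

lemma code_eq_enc (x : ℝ) : ∀ (n : ℕ) (i : Fin n), code q x n i = enc q x i := by
  intro n
  induction n with
  | zero => intro i; exact i.elim0
  | succ n ih =>
      intro i
      refine Fin.lastCases ?_ ?_ i
      · rfl
      · intro j
        rw [code, Fin.snoc_castSucc]
        exact ih j

lemma enc_preimage_cyl (hq0 : ∀ n s, 0 ≤ q n s) (hq1 : ∀ s, q 0 s = 1)
    (hadd : ∀ n s, q (n+1) (Fin.snoc s false) + q (n+1) (Fin.snoc s true) = q n s)
    {x : ℝ} (hx : x ∈ Set.Ico (0:ℝ) 1) (n : ℕ) (s : Fin n → Bool) :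
    enc q x ∈ cylSet n s ↔ x ∈ itv q n s := by
  constructor
  · intro h
    have : code q x n = s := by
      funext i
      rw [code_eq_enc]
      exact h i
    rw [← this]
    exact mem_itv_code q hq0 hq1 hadd hx n
  · intro h
    have hc := code_unique q hq0 hadd hx n s h
    intro i
    rw [← code_eq_enc, hc]

lemma measurableSet_code_eq (n : ℕ) (t : Fin n → Bool) :
    MeasurableSet {x : ℝ | code q x n = t} := by
  induction n with
  | zero =>
      have : {x : ℝ | code q x 0 = t} = Set.univ := by
        ext x; simp [Subsingleton.elim (code q x 0) t]
      rw [this]; exact MeasurableSet.univ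
  | succ n ih =>
      have hdec : {x : ℝ | code q x (n+1) = t} =
          {x : ℝ | code q x n = Fin.init t} ∩
            {x : ℝ | (if lep q n (Fin.init t) + q (n+1) (Fin.snoc (Fin.init t) false) ≤ x
                then true else false) = t (Fin.last n)} := by
        ext x
        simp only [Set.mem_setOf_eq, Set.mem_inter_iff, code]
        constructor
        · intro h
          have h1 : code q x n = Fin.init t := by
            rw [← h, Fin.init_snoc]
          refine ⟨h1, ?_⟩
          rw [← h, Fin.snoc_last, Fin.init_snoc]
        · rintro ⟨h1, h2⟩
          rw [h1, h2, Fin.snoc_init_self]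
      rw [hdec]
      refine (ih _).inter ?_
      rcases (t (Fin.last n)) with _ | _
      · have : {x : ℝ | (if lep q n (Fin.init t) + q (n+1) (Fin.snoc (Fin.init t) false) ≤ x
            then true else false) = false} =
            Set.Iio (lep q n (Fin.init t) + q (n+1) (Fin.snoc (Fin.init t) false)) := by
          ext x
          by_cases h : lep q n (Fin.init t) + q (n+1) (Fin.snoc (Fin.init t) false) ≤ x
          · simp [h, not_lt.mpr h]
          · simp [h, not_le.mp h]
        rw [this]; exact measurableSet_Iio
      · have : {x : ℝ | (if lep q n (Fin.init t) + q (n+1) (Fin.snoc (Fin.init t) false) ≤ x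
            then true else false) = true} =
            Set.Ici (lep q n (Fin.init t) + q (n+1) (Fin.snoc (Fin.init t) false)) := by
          ext x
          by_cases h : lep q n (Fin.init t) + q (n+1) (Fin.snoc (Fin.init t) false) ≤ x
          · simp [h]
          · simp [h]
        rw [this]; exact measurableSet_Ici

lemma measurable_enc : Measurable (enc q) := by
  apply measurable_pi_lambda
  intro l
  apply measurable_to_countable'
  intro b
  have : (fun x => enc q x l) ⁻¹' {b} =
      ⋃ t ∈ {t : Fin (l+1) → Bool | t (Fin.last l) = b}, {x : ℝ | code q x (l+1) = t} := by
    ext x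
    simp only [Set.mem_preimage, Set.mem_singleton_iff, Set.mem_iUnion, Set.mem_setOf_eq]
    constructor
    · intro h
      exact ⟨code q x (l+1), h, rfl⟩
    · rintro ⟨t, hb, ht⟩
      rw [enc, ht]; exact hb
  rw [this]
  exact MeasurableSet.biUnion (Set.to_countable _) (fun t _ => measurableSet_code_eq q (l+1) t)

/-- The tree measure on `ℕ → Bool` with cylinder probabilities `q`. -/
def treeMeasure : Measure (ℕ → Bool) :=
  (volume.restrict (Set.Ico (0:ℝ) 1)).map (enc q)

lemma treeMeasure_cyl (hq0 : ∀ n s, 0 ≤ q n s) (hq1 : ∀ s, q 0 s = 1)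
    (hadd : ∀ n s, q (n+1) (Fin.snoc s false) + q (n+1) (Fin.snoc s true) = q n s)
    (n : ℕ) (s : Fin n → Bool) :
    treeMeasure q (cylSet n s) = ENNReal.ofReal (q n s) := by
  rw [treeMeasure, Measure.map_apply (measurable_enc q) (measurableSet_cylSet n s),
    Measure.restrict_apply (by exact (measurable_enc q) (measurableSet_cylSet n s))]
  have : enc q ⁻¹' cylSet n s ∩ Set.Ico (0:ℝ) 1 = itv q n s := by
    ext x
    constructor
    · rintro ⟨h1, h2⟩
      exact (enc_preimage_cyl q hq0 hq1 hadd h2 n s).mp h1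
    · intro h
      have hx : x ∈ Set.Ico (0:ℝ) 1 := itv_subset_unit q hq0 hq1 hadd n s h
      exact ⟨(enc_preimage_cyl q hq0 hq1 hadd hx n s).mpr h, hx⟩
  rw [this, itv, Real.volume_Ico]
  congr 1
  ring

instance treeMeasure_prob : IsProbabilityMeasure (treeMeasure q) := by
  constructor
  rw [treeMeasure, Measure.map_apply (measurable_enc q) MeasurableSet.univ]
  simp [Real.volume_Ico]

end Tree
end PVPAux
namespace PVPAux

/-- A sequence of finite sets which are eventually exactly invariant is Følner. -/
lemma isFolner_of_mem_iff {G : Type*} [AddCommGroup G] (Φ : ℕ → Finset G)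
    (hne : ∀ N, (Φ N).Nonempty)
    (h : ∀ g : G, ∀ᶠ N in atTop, ∀ x, x ∈ Φ N ↔ x + g ∈ Φ N) : IsFolner Φ := by
  refine ⟨hne, fun g => ?_⟩
  apply Tendsto.congr' _ tendsto_const_nhds
  filter_upwards [h g] with N hN
  have himg : (Φ N).image (· + g) = Φ N := by
    ext x
    simp only [Finset.mem_image]
    constructor
    · rintro ⟨p, hp, rfl⟩
      exact (hN p).1 hp
    · intro hx
      refine ⟨x - g, ?_, sub_add_cancel x g⟩
      apply (hN (x - g)).2
      simpa using hx
  rw [himg, symmDiff_self]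
  simp

section Z

variable {F : Type*} [Field F] [Fintype F]

def polyOf (N : ℕ) (v : Fin N → F) : Polynomial F :=
  ∑ i : Fin N, Polynomial.C (v i) * Polynomial.X ^ (i : ℕ)

lemma polyOf_coeff (N : ℕ) (v : Fin N → F) (j : ℕ) :
    (polyOf N v).coeff j = if h : j < N then v ⟨j, h⟩ else 0 := by
  rw [polyOf, Polynomial.finset_sum_coeff]
  simp only [Polynomial.coeff_C_mul, Polynomial.coeff_X_pow, mul_ite, mul_one, mul_zero]
  by_cases h : j < N
  · rw [dif_pos h]
    rw [Finset.sum_eq_single (⟨j, h⟩ : Fin N)]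
    · simp
    · intro b _ hbj
      have : j ≠ (b : ℕ) := by
        intro e
        apply hbj
        apply Fin.ext
        simp [← e]
      simp [this]
    · intro hmem; exact absurd (Finset.mem_univ _) hmem
  · rw [dif_neg h]
    apply Finset.sum_eq_zero
    intro i _
    have : j ≠ (i : ℕ) := fun e => h (e ▸ i.isLt)
    simp [this]

lemma degree_polyOf (N : ℕ) (v : Fin N → F) : (polyOf N v).degree < (N : ℕ) := by
  rw [Polynomial.degree_lt_iff_coeff_zero]
  intro m hm
  rw [polyOf_coeff]
  rw [dif_neg]
  push_neg
  exact_mod_cast hm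

lemma polyOf_injective (N : ℕ) : Function.Injective (polyOf (F := F) N) := by
  intro v w h
  funext i
  have := congrArg (fun p => Polynomial.coeff p (i : ℕ)) h
  simpa [polyOf_coeff, i.isLt] using this

/-- The `Finset` of polynomials of degree `< N`. -/
def Gdeg (N : ℕ) : Finset (Polynomial F) := Finset.image (polyOf N) Finset.univ

lemma mem_Gdeg {N : ℕ} {p : Polynomial F} : p ∈ Gdeg N ↔ p.degree < (N : ℕ) := by
  constructor
  · rintro hp
    rw [Gdeg, Finset.mem_image] at hp
    obtain ⟨v, _, rfl⟩ := hp
    exact degree_polyOf N v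
  · intro hp
    rw [Gdeg, Finset.mem_image]
    refine ⟨fun i => p.coeff (i : ℕ), Finset.mem_univ _, ?_⟩
    apply Polynomial.ext
    intro j
    rw [polyOf_coeff]
    by_cases h : j < N
    · rw [dif_pos h]
    · rw [dif_neg h]
      symm
      rw [Polynomial.coeff_eq_zero_of_degree_lt]
      calc p.degree < (N : ℕ) := hp
        _ ≤ (j : ℕ) := by exact_mod_cast Nat.le_of_not_lt h

lemma card_Gdeg (N : ℕ) : (Gdeg (F := F) N).card = Fintype.card F ^ N := by
  rw [Gdeg, Finset.card_image_of_injective _ (polyOf_injective N), Finset.card_univ]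
  simp [Fintype.card_fun]

lemma Gdeg_nonempty (N : ℕ) : (Gdeg (F := F) N).Nonempty :=
  ⟨polyOf N (fun _ => 0), Finset.mem_image_of_mem _ (Finset.mem_univ _)⟩

lemma card_Gdeg_pos (N : ℕ) : 0 < ((Gdeg (F := F) N).card : ℝ) := by
  rw [card_Gdeg]
  positivity

lemma add_mem_Gdeg {N : ℕ} {p g : Polynomial F} (hp : p ∈ Gdeg N) (hg : g ∈ Gdeg N) :
    p + g ∈ Gdeg N := by
  rw [mem_Gdeg] at *
  exact lt_of_le_of_lt (Polynomial.degree_add_le _ _) (max_lt hp hg)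

lemma neg_mem_Gdeg {N : ℕ} {g : Polynomial F} (hg : g ∈ Gdeg N) : -g ∈ Gdeg N := by
  rw [mem_Gdeg] at *
  rwa [Polynomial.degree_neg]

lemma Gdeg_image_add {N : ℕ} {g : Polynomial F} (hg : g ∈ Gdeg N) :
    (Gdeg N).image (· + g) = Gdeg N := by
  apply Finset.eq_of_subset_of_card_le
  · intro x hx
    rw [Finset.mem_image] at hx
    obtain ⟨p, hp, rfl⟩ := hx
    exact add_mem_Gdeg hp hg
  · rw [Finset.card_image_of_injective _ (add_left_injective g)]

/-- The coset Følner sets. -/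
def coset (N : ℕ) (h : Polynomial F) : Finset (Polynomial F) := (Gdeg N).image (· + h)

lemma card_coset (N : ℕ) (h : Polynomial F) : (coset N h).card = Fintype.card F ^ N := by
  rw [coset, Finset.card_image_of_injective _ (add_left_injective h), card_Gdeg]

lemma coset_nonempty (N : ℕ) (h : Polynomial F) : (coset N h).Nonempty :=
  (Gdeg_nonempty N).image _

lemma coset_image_add {N : ℕ} {g : Polynomial F} (h : Polynomial F) (hg : g ∈ Gdeg N) :
    (coset N h).image (· + g) = coset N h := by
  show ((Gdeg N).image (· + h)).image (· + g) = (Gdeg N).image (· + h)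
  rw [Finset.image_image]
  have h1 : ((· + g) ∘ (· + h)) = ((· + h) ∘ (· + g) : Polynomial F → Polynomial F) := by
    funext x; simp [add_assoc, add_comm g h]
  rw [h1, ← Finset.image_image, Gdeg_image_add hg]

lemma coset_add_eq {N : ℕ} {g : Polynomial F} (h : Polynomial F) (hg : g ∈ Gdeg N)
    {x : Polynomial F} (hx : x ∈ coset N h) : x + g ∈ coset N h := by
  rw [← coset_image_add h hg]
  exact Finset.mem_image_of_mem _ hx

lemma eventually_mem_Gdeg (g : Polynomial F) {Ns : ℕ → ℕ} (hNs : Tendsto Ns atTop atTop) :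
    ∀ᶠ j in atTop, g ∈ Gdeg (Ns j) := by
  filter_upwards [hNs.eventually_ge_atTop (g.natDegree + 1)] with j hj
  rw [mem_Gdeg]
  calc g.degree ≤ (g.natDegree : ℕ) := Polynomial.degree_le_natDegree
    _ < ((g.natDegree + 1 : ℕ) : WithBot ℕ) := by exact_mod_cast Nat.lt_succ_self _
    _ ≤ (Ns j : ℕ) := by exact_mod_cast hj

lemma mem_coset_iff_add {N : ℕ} {g : Polynomial F} (h : Polynomial F) (hg : g ∈ Gdeg N)
    (x : Polynomial F) : x ∈ coset N h ↔ x + g ∈ coset N h := by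
  constructor
  · intro hx; exact coset_add_eq h hg hx
  · intro hx
    have h2 : (x + g) + (-g) ∈ coset N h := coset_add_eq h (neg_mem_Gdeg hg) hx
    simpa using h2

lemma isFolner_coset (Ns : ℕ → ℕ) (hNs : Tendsto Ns atTop atTop) (h : Polynomial F) :
    IsFolner (fun j => coset (Ns j) h) := by
  apply isFolner_of_mem_iff
  · intro N; exact coset_nonempty _ _
  · intro g
    filter_upwards [eventually_mem_Gdeg g hNs] with j hj
    exact mem_coset_iff_add h hj

lemma isFolner_Gdeg : IsFolner (fun N => Gdeg (F := F) N) := by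
  apply isFolner_of_mem_iff
  · intro N; exact Gdeg_nonempty _
  · intro g
    filter_upwards [eventually_mem_Gdeg g tendsto_id] with j hj
    intro x
    constructor
    · intro hx; exact add_mem_Gdeg hx hj
    · intro hx
      have h2 := add_mem_Gdeg hx (neg_mem_Gdeg hj)
      simpa using h2

end Z
end PVPAux
namespace PVPAux

section Corr

variable {Z : Type*} [AddCommGroup Z]

/-- The shift action of `Z` on `ℕ → Bool` through an enumeration `e`. -/
def shiftT (e : ℕ ≃ Z) (s : Z) (y : ℕ → Bool) : ℕ → Bool :=
  fun l => y (e.symm (e l + s))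

lemma shiftT_zero (e : ℕ ≃ Z) : shiftT e 0 = id := by
  funext y l
  simp [shiftT]

lemma shiftT_add (e : ℕ ≃ Z) (m n : Z) : shiftT e (m + n) = shiftT e m ∘ shiftT e n := by
  funext y l
  simp only [shiftT, Function.comp_apply, Equiv.apply_symm_apply]
  rw [add_assoc]

lemma measurable_shiftT (e : ℕ ≃ Z) (s : Z) : Measurable (shiftT e s) := by
  apply measurable_pi_lambda
  intro l
  exact measurable_pi_apply _

lemma shiftT_inv_left (e : ℕ ≃ Z) (s : Z) (y : ℕ → Bool) :
    shiftT e s (shiftT e (-s) y) = y := by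
  have := congrFun (shiftT_add e s (-s)) y
  simp only [add_neg_cancel, shiftT_zero, id_eq, Function.comp_apply] at this
  exact this.symm

lemma shiftT_inv_right (e : ℕ ≃ Z) (s : Z) (y : ℕ → Bool) :
    shiftT e (-s) (shiftT e s y) = y := by
  have := congrFun (shiftT_add e (-s) s) y
  simp only [neg_add_cancel, shiftT_zero, id_eq, Function.comp_apply] at this
  exact this.symm

lemma shiftT_image (e : ℕ ≃ Z) (s : Z) (A : Set (ℕ → Bool)) :
    shiftT e (-s) '' A = shiftT e s ⁻¹' A := by
  ext y
  constructor
  · rintro ⟨a, ha, rfl⟩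
    rw [Set.mem_preimage, shiftT_inv_left]
    exact ha
  · intro hy
    exact ⟨shiftT e s y, hy, shiftT_inv_right e s y⟩

/-- Constraint (cylinder) sets. -/
def cstr (t : Finset ℕ) (v : ℕ → Bool) : Set (ℕ → Bool) := {y | ∀ l ∈ t, y l = v l}

lemma measurableSet_cstr (t : Finset ℕ) (v : ℕ → Bool) : MeasurableSet (cstr t v) := by
  have : cstr t v = ⋂ l ∈ t, ((fun y : ℕ → Bool => y l) ⁻¹' {v l}) := by
    ext y; simp [cstr]
  rw [this]
  exact MeasurableSet.biInter (Finset.countable_toSet t)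
    (fun l _ => (measurable_pi_apply _) (measurableSet_singleton _))

lemma cstr_univ (v : ℕ → Bool) : cstr ∅ v = Set.univ := by
  ext y; simp [cstr]

/-- Ultrafilter limit of a `[0,1]`-valued sequence. -/
def Ulim (𝒰 : Ultrafilter ℕ) (u : ℕ → ℝ) : ℝ :=
  if h : ∃ x ∈ Set.Icc (0:ℝ) 1, Tendsto u ↑𝒰 (nhds x) then h.choose else 0

lemma Ulim_spec (𝒰 : Ultrafilter ℕ) {u : ℕ → ℝ} (hu : ∀ i, u i ∈ Set.Icc (0:ℝ) 1) :
    Tendsto u ↑𝒰 (nhds (Ulim 𝒰 u)) ∧ Ulim 𝒰 u ∈ Set.Icc (0:ℝ) 1 := by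
  have hex : ∃ x ∈ Set.Icc (0:ℝ) 1, Tendsto u ↑𝒰 (nhds x) := by
    have hle : ↑(𝒰.map u) ≤ Filter.principal (Set.Icc (0:ℝ) 1) := by
      rw [Filter.le_principal_iff]
      exact Filter.mem_map.mpr (by
        have : ∀ i, i ∈ u ⁻¹' Set.Icc (0:ℝ) 1 := hu
        exact Filter.univ_mem' this)
    obtain ⟨x, hx, hlim⟩ := isCompact_Icc.ultrafilter_le_nhds (𝒰.map u) hle
    rw [Ultrafilter.coe_map] at hlim
    exact ⟨x, hx, hlim⟩
  rw [Ulim, dif_pos hex]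
  exact ⟨hex.choose_spec.2, hex.choose_spec.1⟩

lemma Ulim_eq_of_tendsto (𝒰 : Ultrafilter ℕ) {u : ℕ → ℝ} {x : ℝ}
    (hu : ∀ i, u i ∈ Set.Icc (0:ℝ) 1) (hx : Tendsto u ↑𝒰 (nhds x)) : Ulim 𝒰 u = x :=
  tendsto_nhds_unique (Ulim_spec 𝒰 hu).1 hx

variable (e : ℕ ≃ Z) (E : Set Z) (Ψ : ℕ → Finset Z)

/-- Bool indicator of `E`. -/
def chiE : Z → Bool := fun z => if z ∈ E then true else false

lemma chiE_eq_true {z : Z} : chiE E z = true ↔ z ∈ E := by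
  rw [chiE]
  by_cases h : z ∈ E <;> simp [h]

/-- Empirical density of a constraint pattern. -/
def emp (i : ℕ) (t : Finset ℕ) (v : ℕ → Bool) : ℝ :=
  (((Ψ i).filter (fun g => ∀ l ∈ t, chiE E (g + e l) = v l)).card : ℝ) / ((Ψ i).card : ℝ)

/-- Empirical density of an initial-segment cylinder. -/
def empF (i : ℕ) (n : ℕ) (s : Fin n → Bool) : ℝ :=
  (((Ψ i).filter (fun g => ∀ l : Fin n, chiE E (g + e (l : ℕ)) = s l)).card : ℝ)
    / ((Ψ i).card : ℝ)

lemma emp_mem_Icc (hcard : ∀ i, 0 < (Ψ i).card) (i : ℕ) (t : Finset ℕ) (v : ℕ → Bool) :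
    emp e E Ψ i t v ∈ Set.Icc (0:ℝ) 1 := by
  rw [emp]
  constructor
  · apply div_nonneg <;> positivity
  · rw [div_le_one (by exact_mod_cast hcard i)]
    exact_mod_cast Finset.card_filter_le _ _

lemma empF_mem_Icc (hcard : ∀ i, 0 < (Ψ i).card) (i : ℕ) (n : ℕ) (s : Fin n → Bool) :
    empF e E Ψ i n s ∈ Set.Icc (0:ℝ) 1 := by
  rw [empF]
  constructor
  · apply div_nonneg <;> positivity
  · rw [div_le_one (by exact_mod_cast hcard i)]
    exact_mod_cast Finset.card_filter_le _ _

variable (𝒰 : Ultrafilter ℕ)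

/-- Cylinder probabilities of the correspondence measure. -/
def qcorr (n : ℕ) (s : Fin n → Bool) : ℝ := Ulim 𝒰 (fun i => empF e E Ψ i n s)

lemma qcorr_nonneg (hcard : ∀ i, 0 < (Ψ i).card) (n : ℕ) (s : Fin n → Bool) : 0 ≤ qcorr e E Ψ 𝒰 n s :=
  (Ulim_spec 𝒰 (fun i => empF_mem_Icc e E Ψ hcard i n s)).2.1

lemma qcorr_zero (hcard : ∀ i, 0 < (Ψ i).card) (s : Fin 0 → Bool) : qcorr e E Ψ 𝒰 0 s = 1 := by
  apply Ulim_eq_of_tendsto 𝒰 (fun i => empF_mem_Icc e E Ψ hcard i 0 s)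
  have : ∀ i, empF e E Ψ i 0 s = 1 := by
    intro i
    rw [empF]
    have h1 : (Ψ i).filter (fun g => ∀ l : Fin 0, chiE E (g + e (l:ℕ)) = s l) = Ψ i := by
      apply Finset.filter_true_of_mem
      intro g _ l
      exact l.elim0
    rw [h1, div_self]
    exact ne_of_gt (by exact_mod_cast hcard _)
  rw [funext this]
  exact tendsto_const_nhds

lemma empF_succ (i : ℕ) (n : ℕ) (s : Fin n → Bool) :
    empF e E Ψ i (n+1) (Fin.snoc s false) + empF e E Ψ i (n+1) (Fin.snoc s true)
      = empF e E Ψ i n s := by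
  rw [empF, empF, empF, ← add_div]
  congr 1
  have key : ∀ b : Bool, (Ψ i).filter
      (fun g => ∀ l : Fin (n+1), chiE E (g + e (l:ℕ)) = (Fin.snoc s b : Fin (n+1) → Bool) l)
      = (Ψ i).filter (fun g => (∀ l : Fin n, chiE E (g + e (l:ℕ)) = s l)
          ∧ chiE E (g + e n) = b) := by
    intro b
    apply Finset.filter_congr
    intro g _
    constructor
    · intro h
      constructor
      · intro l
        have := h (Fin.castSucc l)
        rwa [Fin.snoc_castSucc, Fin.coe_castSucc] at this
      · have := h (Fin.last n)
        rwa [Fin.snoc_last, Fin.val_last] at this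
    · rintro ⟨h1, h2⟩ l
      refine Fin.lastCases ?_ ?_ l
      · rwa [Fin.snoc_last, Fin.val_last]
      · intro j
        rw [Fin.snoc_castSucc, Fin.coe_castSucc]
        exact h1 j
  rw [key false, key true]
  rw [← Nat.cast_add]
  norm_cast
  rw [← Finset.card_union_of_disjoint]
  · congr 1
    ext g
    simp only [Finset.mem_union, Finset.mem_filter]
    constructor
    · rintro (⟨hg, h1, _⟩ | ⟨hg, h1, _⟩) <;> exact ⟨hg, h1⟩
    · rintro ⟨hg, h1⟩
      rcases hb : chiE E (g + e n) with _ | _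
      · exact Or.inl ⟨hg, h1, rfl⟩
      · exact Or.inr ⟨hg, h1, rfl⟩
  · rw [Finset.disjoint_left]
    intro g hgf hgt
    rw [Finset.mem_filter] at hgf hgt
    rw [hgf.2.2] at hgt
    exact Bool.noConfusion hgt.2.2

lemma qcorr_add (hcard : ∀ i, 0 < (Ψ i).card) (n : ℕ) (s : Fin n → Bool) :
    qcorr e E Ψ 𝒰 (n+1) (Fin.snoc s false) + qcorr e E Ψ 𝒰 (n+1) (Fin.snoc s true)
      = qcorr e E Ψ 𝒰 n s := by
  symm
  apply Ulim_eq_of_tendsto 𝒰 (fun i => empF_mem_Icc e E Ψ hcard i n s)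
  have h1 := (Ulim_spec 𝒰 (fun i => empF_mem_Icc e E Ψ hcard i (n+1) (Fin.snoc s false))).1
  have h2 := (Ulim_spec 𝒰 (fun i => empF_mem_Icc e E Ψ hcard i (n+1) (Fin.snoc s true))).1
  have := h1.add h2
  apply this.congr
  intro i
  exact empF_succ e E Ψ i n s

/-- The correspondence measure. -/
def corr : Measure (ℕ → Bool) := treeMeasure (qcorr e E Ψ 𝒰)

instance corr_prob : IsProbabilityMeasure (corr e E Ψ 𝒰) := treeMeasure_prob _

end Corr
end PVPAux
namespace PVPAux

section CorrB

variable {Z : Type*} [AddCommGroup Z] (e : ℕ ≃ Z) (E : Set Z) (Ψ : ℕ → Finset Z)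
  (𝒰 : Ultrafilter ℕ)

/-- Compatibility of a length-`n` pattern with a constraint. -/
def Compat (n : ℕ) (t : Finset ℕ) (v : ℕ → Bool) : Finset (Fin n → Bool) :=
  Finset.univ.filter (fun s : Fin n → Bool => ∀ l : Fin n, (l : ℕ) ∈ t → s l = v l)

lemma emp_eq_sum_empF (i : ℕ) (t : Finset ℕ) (v : ℕ → Bool) {n : ℕ}
    (hn : ∀ l ∈ t, l < n) :
    emp e E Ψ i t v = ∑ s ∈ Compat n t v, empF e E Ψ i n s := by
  rw [emp]
  have hdef : ∀ s ∈ Compat n t v, empF e E Ψ i n s =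
      (((Ψ i).filter (fun g => ∀ l : Fin n, chiE E (g + e (l : ℕ)) = s l)).card : ℝ)
        / ((Ψ i).card : ℝ) := fun s _ => rfl
  rw [Finset.sum_congr rfl hdef, ← Finset.sum_div]
  congr 1
  rw [← Nat.cast_sum]
  congr 1
  have hmem : ∀ g ∈ (Ψ i).filter (fun g => ∀ l ∈ t, chiE E (g + e l) = v l),
      (fun l : Fin n => chiE E (g + e (l : ℕ))) ∈ Compat n t v := by
    intro g hg
    rw [Finset.mem_filter] at hg
    rw [Compat, Finset.mem_filter]
    exact ⟨Finset.mem_univ _, fun l hl => hg.2 _ hl⟩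
  rw [Finset.card_eq_sum_card_fiberwise hmem]
  apply Finset.sum_congr rfl
  intro s hs
  rw [Compat, Finset.mem_filter] at hs
  rw [Finset.filter_filter]
  congr 1
  apply Finset.filter_congr
  intro g _
  constructor
  · rintro ⟨-, h2⟩
    intro l
    exact congrFun h2 l
  · intro h
    constructor
    · intro l hl
      rw [h ⟨l, hn l hl⟩]
      exact hs.2 ⟨l, hn l hl⟩ hl
    · funext l
      exact h l

lemma tendsto_emp (hcard : ∀ i, 0 < (Ψ i).card) (t : Finset ℕ) (v : ℕ → Bool) {n : ℕ}
    (hn : ∀ l ∈ t, l < n) :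
    Tendsto (fun i => emp e E Ψ i t v) ↑𝒰
      (nhds (∑ s ∈ Compat n t v, qcorr e E Ψ 𝒰 n s)) := by
  have h1 : Tendsto (fun i => ∑ s ∈ Compat n t v, empF e E Ψ i n s) ↑𝒰
      (nhds (∑ s ∈ Compat n t v, qcorr e E Ψ 𝒰 n s)) := by
    apply tendsto_finset_sum
    intro s _
    exact (Ulim_spec 𝒰 (fun i => empF_mem_Icc e E Ψ hcard i n s)).1
  apply h1.congr
  intro i
  exact (emp_eq_sum_empF e E Ψ i t v hn).symm

lemma Ulim_emp_eq (hcard : ∀ i, 0 < (Ψ i).card) (t : Finset ℕ) (v : ℕ → Bool) {n : ℕ}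
    (hn : ∀ l ∈ t, l < n) :
    Ulim 𝒰 (fun i => emp e E Ψ i t v) = ∑ s ∈ Compat n t v, qcorr e E Ψ 𝒰 n s :=
  Ulim_eq_of_tendsto 𝒰 (fun i => emp_mem_Icc e E Ψ hcard i t v)
    (tendsto_emp e E Ψ 𝒰 hcard t v hn)

lemma cstr_eq_biUnion (t : Finset ℕ) (v : ℕ → Bool) {n : ℕ} (hn : ∀ l ∈ t, l < n) :
    cstr t v = ⋃ s ∈ Compat n t v, cylSet n s := by
  ext y
  simp only [Set.mem_iUnion, cstr, Set.mem_setOf_eq]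
  constructor
  · intro h
    refine ⟨fun l : Fin n => y (l : ℕ), ?_, ?_⟩
    · rw [Compat, Finset.mem_filter]
      exact ⟨Finset.mem_univ _, fun l hl => h _ hl⟩
    · intro i; rfl
  · rintro ⟨s, hs, hy⟩
    rw [Compat, Finset.mem_filter] at hs
    intro l hl
    have h1 : y l = s ⟨l, hn l hl⟩ := hy ⟨l, hn l hl⟩
    rw [h1, hs.2 _ hl]

lemma corr_cstr (hcard : ∀ i, 0 < (Ψ i).card) (t : Finset ℕ) (v : ℕ → Bool) :
    corr e E Ψ 𝒰 (cstr t v) = ENNReal.ofReal (Ulim 𝒰 (fun i => emp e E Ψ i t v)) := by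
  set n := (t.sup id) + 1 with hn_def
  have hn : ∀ l ∈ t, l < n := fun l hl =>
    Nat.lt_succ_of_le (by simpa using Finset.le_sup (f := id) hl)
  rw [cstr_eq_biUnion t v hn]
  rw [measure_biUnion_finset ?hd ?hm]
  case hd =>
    intro s hs s' hs' hne
    apply Set.disjoint_left.mpr
    intro y hy hy'
    apply hne
    funext i
    rw [← hy i, ← hy' i]
  case hm => exact fun s _ => measurableSet_cylSet n s
  rw [corr] at *
  have h1 : ∀ s ∈ Compat n t v,
      treeMeasure (qcorr e E Ψ 𝒰) (cylSet n s) = ENNReal.ofReal (qcorr e E Ψ 𝒰 n s) :=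
    fun s _ => treeMeasure_cyl _ (qcorr_nonneg e E Ψ 𝒰 hcard) (qcorr_zero e E Ψ 𝒰 hcard)
      (qcorr_add e E Ψ 𝒰 hcard) n s
  rw [Finset.sum_congr rfl h1]
  rw [← ENNReal.ofReal_sum_of_nonneg (fun s _ => qcorr_nonneg e E Ψ 𝒰 hcard n s)]
  rw [Ulim_emp_eq e E Ψ 𝒰 hcard t v hn]

/-- The family of constraint sets. -/
def cstrFamily : Set (Set (ℕ → Bool)) := {S | ∃ t v, S = cstr t v}

lemma generateFrom_cstrFamily :
    (inferInstance : MeasurableSpace (ℕ → Bool)) = MeasurableSpace.generateFrom cstrFamily := by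
  refine le_antisymm ?_ ?_
  · refine iSup_le fun l => ?_
    intro S hS
    rw [MeasurableSpace.measurableSet_comap] at hS
    obtain ⟨s, -, rfl⟩ := hS
    have : (fun y : ℕ → Bool => y l) ⁻¹' s = ⋃ b ∈ s, cstr {l} (fun _ => b) := by
      ext y
      simp only [Set.mem_preimage, Set.mem_iUnion, cstr, Set.mem_setOf_eq, Finset.mem_singleton]
      constructor
      · intro h
        exact ⟨y l, h, fun l' hl' => by rw [hl']⟩
      · rintro ⟨b, hb, h⟩
        rw [h l rfl]
        exact hb
    rw [this]
    exact MeasurableSet.biUnion (Set.to_countable _)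
      (fun b _ => MeasurableSpace.measurableSet_generateFrom ⟨{l}, fun _ => b, rfl⟩)
  · apply MeasurableSpace.generateFrom_le
    rintro S ⟨t, v, rfl⟩
    exact measurableSet_cstr t v

lemma isPiSystem_cstrFamily : IsPiSystem cstrFamily := by
  rintro S ⟨t₁, v₁, rfl⟩ S' ⟨t₂, v₂, rfl⟩ hne
  obtain ⟨y₀, hy₀⟩ := hne
  refine ⟨t₁ ∪ t₂, fun l => if l ∈ t₁ then v₁ l else v₂ l, ?_⟩
  ext y
  simp only [Set.mem_inter_iff, cstr, Set.mem_setOf_eq, Finset.mem_union]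
  constructor
  · rintro ⟨h1, h2⟩
    intro l hl
    by_cases hl1 : l ∈ t₁
    · rw [if_pos hl1]; exact h1 l hl1
    · rw [if_neg hl1]
      rcases hl with hl | hl
      · exact absurd hl hl1
      · exact h2 l hl
  · intro h
    constructor
    · intro l hl
      have := h l (Or.inl hl)
      rwa [if_pos hl] at this
    · intro l hl
      by_cases hl1 : l ∈ t₁
      · have h3 := h l (Or.inl hl1)
        rw [if_pos hl1] at h3
        rw [h3]
        have e1 := hy₀.1 l hl1
        have e2 := hy₀.2 l hl
        rw [← e1, e2]
      · have := h l (Or.inr hl)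
        rwa [if_neg hl1] at this

lemma shiftT_preimage_cstr (n : Z) (t : Finset ℕ) (v : ℕ → Bool) :
    shiftT e n ⁻¹' cstr t v =
      cstr (t.image (fun l => e.symm (e l + n))) (fun l' => v (e.symm (e l' - n))) := by
  ext y
  simp only [Set.mem_preimage, cstr, Set.mem_setOf_eq, shiftT, Finset.mem_image]
  constructor
  · intro h l' hl'
    obtain ⟨l, hl, rfl⟩ := hl'
    have : e.symm (e (e.symm (e l + n)) - n) = l := by
      rw [Equiv.apply_symm_apply, add_sub_cancel_right, Equiv.symm_apply_apply]
    rw [this]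
    exact h l hl
  · intro h l hl
    have := h (e.symm (e l + n)) ⟨l, hl, rfl⟩
    rwa [Equiv.apply_symm_apply, add_sub_cancel_right, Equiv.symm_apply_apply] at this

lemma emp_shift (i : ℕ) (n : Z) (t : Finset ℕ) (v : ℕ → Bool)
    (hinv : ∀ x, x ∈ Ψ i ↔ x + n ∈ Ψ i) :
    emp e E Ψ i (t.image (fun l => e.symm (e l + n))) (fun l' => v (e.symm (e l' - n)))
      = emp e E Ψ i t v := by
  rw [emp, emp]
  congr 1
  have hcond : ∀ g : Z,
      (∀ l' ∈ t.image (fun l => e.symm (e l + n)),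
        chiE E (g + e l') = v (e.symm (e l' - n)))
      ↔ (∀ l ∈ t, chiE E ((g + n) + e l) = v l) := by
    intro g
    constructor
    · intro h l hl
      have := h (e.symm (e l + n)) (Finset.mem_image_of_mem _ hl)
      rw [Equiv.apply_symm_apply, add_sub_cancel_right, Equiv.symm_apply_apply] at this
      rw [← this]
      congr 1
      abel
    · intro h l' hl'
      rw [Finset.mem_image] at hl'
      obtain ⟨l, hl, rfl⟩ := hl'
      rw [Equiv.apply_symm_apply, add_sub_cancel_right, Equiv.symm_apply_apply]
      have := h l hl
      rw [← this]
      congr 1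
      abel
  norm_cast
  have hfe : (Ψ i).filter (fun g => ∀ l' ∈ t.image (fun l => e.symm (e l + n)),
        chiE E (g + e l') = v (e.symm (e l' - n)))
      = (Ψ i).filter (fun g => ∀ l ∈ t, chiE E ((g + n) + e l) = v l) := by
    apply Finset.filter_congr
    intro g _
    exact hcond g
  rw [hfe]
  apply Finset.card_bij (fun (g : Z) _ => g + n)
  · intro g hg
    rw [Finset.mem_filter] at hg ⊢
    exact ⟨(hinv g).1 hg.1, hg.2⟩
  · intro g₁ h₁ g₂ h₂ hgg
    exact add_right_cancel hgg
  · intro h hh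
    rw [Finset.mem_filter] at hh
    refine ⟨h - n, ?_, ?_⟩
    · rw [Finset.mem_filter]
      constructor
      · apply (hinv (h - n)).2
        rw [sub_add_cancel]
        exact hh.1
      · rw [sub_add_cancel]
        exact hh.2
    · rw [sub_add_cancel]

lemma corr_map_shiftT (hcard : ∀ i, 0 < (Ψ i).card) (h𝒰 : ↑𝒰 ≤ (atTop : Filter ℕ))
    (n : Z) (hinv : ∀ᶠ i in (atTop : Filter ℕ), ∀ x, x ∈ Ψ i ↔ x + n ∈ Ψ i) :
    MeasurePreserving (shiftT e n) (corr e E Ψ 𝒰) (corr e E Ψ 𝒰) := by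
  refine ⟨measurable_shiftT e n, ?_⟩
  haveI : IsProbabilityMeasure ((corr e E Ψ 𝒰).map (shiftT e n)) :=
    MeasureTheory.Measure.isProbabilityMeasure_map (measurable_shiftT e n).aemeasurable
  apply MeasureTheory.ext_of_generate_finite cstrFamily (generateFrom_cstrFamily)
    isPiSystem_cstrFamily
  · rintro S ⟨t, v, rfl⟩
    rw [Measure.map_apply (measurable_shiftT e n) (measurableSet_cstr t v)]
    rw [shiftT_preimage_cstr]
    rw [corr_cstr e E Ψ 𝒰 hcard, corr_cstr e E Ψ 𝒰 hcard]
    congr 1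
    apply Ulim_eq_of_tendsto 𝒰 (fun i => emp_mem_Icc e E Ψ hcard i _ _)
    have hbase := (Ulim_spec 𝒰 (fun i => emp_mem_Icc e E Ψ hcard i t v)).1
    apply hbase.congr'
    apply Filter.Eventually.filter_mono h𝒰
    filter_upwards [hinv] with i hi
    exact (emp_shift e E Ψ i n t v hi).symm
  · rw [Measure.map_apply (measurable_shiftT e n) MeasurableSet.univ]
    simp

/-- The distinguished set. -/
def Acorr : Set (ℕ → Bool) := cstr {(e.symm 0 : ℕ)} (fun _ => true)

lemma measurableSet_Acorr : MeasurableSet (Acorr e) := measurableSet_cstr _ _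

lemma corr_Acorr (hcard : ∀ i, 0 < (Ψ i).card) {c : ℝ}
    (hdens : ∀ i, c * ((Ψ i).card : ℝ) ≤ (((Ψ i).filter (· ∈ E)).card : ℝ)) :
    c ≤ (corr e E Ψ 𝒰 (Acorr e)).toReal := by
  rw [Acorr, corr_cstr e E Ψ 𝒰 hcard]
  have hemp : ∀ i, c ≤ emp e E Ψ i {(e.symm 0 : ℕ)} (fun _ => true) := by
    intro i
    rw [emp]
    have hfe : (Ψ i).filter (fun g => ∀ l ∈ ({(e.symm 0 : ℕ)} : Finset ℕ),
        chiE E (g + e l) = true) = (Ψ i).filter (· ∈ E) := by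
      apply Finset.filter_congr
      intro g _
      simp only [Finset.mem_singleton]
      constructor
      · intro h
        have := h _ rfl
        rw [Equiv.apply_symm_apply, add_zero, chiE_eq_true] at this
        exact this
      · intro hg l hl
        rw [hl, Equiv.apply_symm_apply, add_zero, chiE_eq_true]
        exact hg
    rw [hfe]
    rw [le_div_iff₀ (by exact_mod_cast hcard i)]
    exact hdens i
  have hUlim : c ≤ Ulim 𝒰 (fun i => emp e E Ψ i {(e.symm 0 : ℕ)} (fun _ => true)) := by
    apply ge_of_tendsto (Ulim_spec 𝒰 (fun i => emp_mem_Icc e E Ψ hcard i _ _)).1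
    exact Filter.Eventually.of_forall hemp
  rw [ENNReal.toReal_ofReal]
  · exact hUlim
  · exact (Ulim_spec 𝒰 (fun i => emp_mem_Icc e E Ψ hcard i _ _)).2.1

lemma corr_pair (hcard : ∀ i, 0 < (Ψ i).card) (s : Z)
    (hpos : corr e E Ψ 𝒰 (Acorr e ∩ (shiftT e (-s) '' Acorr e)) ≠ 0) :
    ∃ g, g ∈ E ∧ g + s ∈ E := by
  rw [shiftT_image] at hpos
  have hev : Acorr e ∩ shiftT e s ⁻¹' Acorr e
      = cstr ({(e.symm 0 : ℕ)} ∪ {(e.symm s : ℕ)}) (fun _ => true) := by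
    ext y
    simp only [Set.mem_inter_iff, Set.mem_preimage, Acorr, cstr, Set.mem_setOf_eq, shiftT,
      Finset.mem_union, Finset.mem_singleton]
    constructor
    · rintro ⟨h1, h2⟩
      intro l hl
      rcases hl with hl | hl
      · rw [hl]; exact h1 _ rfl
      · rw [hl]
        have := h2 _ rfl
        rwa [Equiv.apply_symm_apply, zero_add] at this
    · intro h
      constructor
      · intro l hl; rw [hl]; exact h _ (Or.inl rfl)
      · intro l hl
        rw [hl, Equiv.apply_symm_apply, zero_add]
        exact h _ (Or.inr rfl)
  rw [hev, corr_cstr e E Ψ 𝒰 hcard] at hpos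
  have hU : 0 < Ulim 𝒰 (fun i => emp e E Ψ i ({(e.symm 0 : ℕ)} ∪ {(e.symm s : ℕ)})
      (fun _ => true)) := by
    by_contra hc
    push_neg at hc
    exact hpos (by rw [ENNReal.ofReal_eq_zero.mpr hc])
  have hfreq : ∀ᶠ i in ↑𝒰, 0 < emp e E Ψ i ({(e.symm 0 : ℕ)} ∪ {(e.symm s : ℕ)})
      (fun _ => true) := by
    have := (Ulim_spec 𝒰 (fun i => emp_mem_Icc e E Ψ hcard i
      ({(e.symm 0 : ℕ)} ∪ {(e.symm s : ℕ)}) (fun _ => true))).1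
    exact this (Ioi_mem_nhds hU)
  obtain ⟨i, hi⟩ := hfreq.exists
  rw [emp] at hi
  have hnum : ((Ψ i).filter (fun g => ∀ l ∈ ({(e.symm 0 : ℕ)} ∪ {(e.symm s : ℕ)} : Finset ℕ),
      chiE E (g + e l) = true)).card ≠ 0 := by
    intro hc
    rw [hc] at hi
    norm_num at hi
  obtain ⟨g, hg⟩ := Finset.card_pos.mp (Nat.pos_of_ne_zero hnum)
  rw [Finset.mem_filter] at hg
  refine ⟨g, ?_, ?_⟩
  · have := hg.2 _ (Finset.mem_union_left _ (Finset.mem_singleton_self _))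
    rwa [Equiv.apply_symm_apply, add_zero, chiE_eq_true] at this
  · have := hg.2 _ (Finset.mem_union_right _ (Finset.mem_singleton_self _))
    rwa [Equiv.apply_symm_apply, chiE_eq_true] at this

end CorrB
end PVPAux
namespace PVPAux

section Prod

variable {ι : Type} [Fintype ι] {Z : Type*} [AddCommGroup Z] (e : ℕ ≃ Z)

/-- Product of shift systems. -/
def prodT (s : Z) (x : ι → ℕ → Bool) : ι → ℕ → Bool := fun j => shiftT e s (x j)

lemma measurable_prodT (s : Z) : Measurable (prodT (ι := ι) e s) :=
  measurable_pi_lambda _ fun j => (measurable_shiftT e s).comp (measurable_pi_apply j)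

lemma prodT_zero : prodT (ι := ι) e 0 = id := by
  funext x j
  rw [prodT, shiftT_zero]
  rfl

lemma prodT_add (m n : Z) : prodT (ι := ι) e (m + n) = prodT e m ∘ prodT e n := by
  funext x j
  rw [Function.comp_apply, prodT, prodT, prodT, shiftT_add]
  rfl

lemma prodT_preimage_pi (s : Z) (B : ι → Set (ℕ → Bool)) :
    prodT e s ⁻¹' Set.pi Set.univ B = Set.pi Set.univ (fun j => shiftT e s ⁻¹' B j) := by
  ext x
  simp [prodT, Set.mem_pi]

lemma prodT_image (s : Z) (B : Set (ι → ℕ → Bool)) :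
    prodT e (-s) '' B = prodT e s ⁻¹' B := by
  ext x
  constructor
  · rintro ⟨a, ha, rfl⟩
    have : prodT e s (prodT e (-s) a) = a := by
      funext j
      rw [prodT, prodT, shiftT_inv_left]
    rw [Set.mem_preimage, this]
    exact ha
  · intro hx
    refine ⟨prodT e s x, hx, ?_⟩
    funext j
    rw [prodT, prodT, shiftT_inv_right]

variable (μv : ι → Measure (ℕ → Bool)) [∀ j, IsProbabilityMeasure (μv j)]

lemma measurePreserving_prodT (s : Z)
    (h : ∀ j, MeasurePreserving (shiftT e s) (μv j) (μv j)) :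
    MeasurePreserving (prodT e s) (Measure.pi μv) (Measure.pi μv) := by
  refine ⟨measurable_prodT e s, ?_⟩
  symm
  apply Measure.pi_eq
  intro B hB
  rw [Measure.map_apply (measurable_prodT e s) (MeasurableSet.univ_pi hB)]
  rw [prodT_preimage_pi]
  rw [Measure.pi_pi]
  apply Finset.prod_congr rfl
  intro j _
  exact (h j).measure_preimage (hB j).nullMeasurableSet

/-- The product of the distinguished sets. -/
def prodA : Set (ι → ℕ → Bool) := Set.pi Set.univ (fun _ => Acorr e)

lemma measurableSet_prodA : MeasurableSet (prodA (ι := ι) e) :=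
  MeasurableSet.univ_pi fun _ => measurableSet_Acorr e

lemma pi_prodA : Measure.pi μv (prodA e) = ∏ j, μv j (Acorr e) := by
  rw [prodA, Measure.pi_pi]

lemma pi_prodA_event (s : Z) :
    Measure.pi μv (prodA e ∩ (prodT e (-s) '' prodA e))
      = ∏ j, μv j (Acorr e ∩ (shiftT e (-s) '' Acorr e)) := by
  rw [prodT_image, prodA, prodT_preimage_pi, ← Set.pi_inter_distrib, Measure.pi_pi]
  apply Finset.prod_congr rfl
  intro j _
  rw [shiftT_image]

end Prod
end PVPAux
namespace PVPAux

section Main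

variable {F : Type*} [Field F] [Fintype F]

/-- Positive upper Banach density along translated boxes. -/
def GoodC (E : Set (Polynomial F)) : Prop :=
  ∃ c : ℝ, 0 < c ∧ ∃ h : Polynomial F, ∀ N₀ : ℕ, ∃ N, N₀ ≤ N ∧
    c * ((Gdeg (F := F) N).card : ℝ) ≤ (((coset N h).filter (· ∈ E)).card : ℝ)

lemma corr_system_exists (e : ℕ ≃ Polynomial F) (𝒰 : Ultrafilter ℕ)
    (h𝒰 : ↑𝒰 ≤ (atTop : Filter ℕ)) (E : Set (Polynomial F)) (hE : GoodC E) :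
    ∃ μ : Measure (ℕ → Bool), IsProbabilityMeasure μ ∧
      (∀ n : Polynomial F, MeasurePreserving (shiftT e n) μ μ) ∧
      0 < (μ (Acorr e)).toReal ∧
      ∀ s : Polynomial F, μ (Acorr e ∩ (shiftT e (-s) '' Acorr e)) ≠ 0 →
        ∃ x, x ∈ E ∧ x + s ∈ E := by
  obtain ⟨c, hc, h, hNs⟩ := hE
  have hfreq : ∃ᶠ N in atTop, c * ((Gdeg (F := F) N).card : ℝ)
      ≤ (((coset N h).filter (· ∈ E)).card : ℝ) := by
    rw [Filter.frequently_atTop]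
    intro a
    obtain ⟨N, hN1, hN2⟩ := hNs a
    exact ⟨N, hN1, hN2⟩
  obtain ⟨φ, hφmono, hφ⟩ := Filter.extraction_of_frequently_atTop hfreq
  set Ψ : ℕ → Finset (Polynomial F) := fun j => coset (φ j) h with hΨ
  have hcard : ∀ i, 0 < (Ψ i).card := by
    intro i
    rw [hΨ]
    simp only
    rw [card_coset]
    exact pow_pos Fintype.card_pos _
  have hdens : ∀ i, c * ((Ψ i).card : ℝ) ≤ (((Ψ i).filter (· ∈ E)).card : ℝ) := by
    intro i
    have h2 := hφ i
    rw [hΨ]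
    simp only
    rw [card_coset, ← card_Gdeg]
    exact h2
  have hinv : ∀ n : Polynomial F, ∀ᶠ i in (atTop : Filter ℕ), ∀ x, x ∈ Ψ i ↔ x + n ∈ Ψ i := by
    intro n
    filter_upwards [eventually_mem_Gdeg n hφmono.tendsto_atTop] with i hi
    exact mem_coset_iff_add h hi
  refine ⟨corr e E Ψ 𝒰, corr_prob e E Ψ 𝒰,
    fun n => corr_map_shiftT e E Ψ 𝒰 hcard h𝒰 n (hinv n), ?_,
    fun s => corr_pair e E Ψ 𝒰 hcard s⟩
  calc (0:ℝ) < c := hc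
    _ ≤ _ := corr_Acorr e E Ψ 𝒰 hcard hdens

lemma mul_mem_Gdeg_shift {m : Polynomial F} (hm : m ≠ 0) {N : ℕ} {n : Polynomial F}
    (hn : n ∈ Gdeg N) : m * n ∈ Gdeg (N + m.natDegree) := by
  rw [mem_Gdeg] at *
  by_cases h0 : n = 0
  · subst h0
    rw [mul_zero]
    simpa [Polynomial.degree_zero] using WithBot.bot_lt_coe (N + m.natDegree)
  · rw [Polynomial.degree_mul]
    have hdm : m.degree = (m.natDegree : ℕ) := Polynomial.degree_eq_natDegree hm
    rw [hdm]
    calc (m.natDegree : WithBot ℕ) + n.degree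
        < (m.natDegree : WithBot ℕ) + (N : ℕ) :=
          WithBot.add_lt_add_left (by exact_mod_cast WithBot.coe_ne_bot) hn
      _ = ((N + m.natDegree : ℕ) : WithBot ℕ) := by
          push_cast
          ring

lemma main_step (f : Polynomial (Polynomial F)) (hv : PropV f)
    (e : ℕ ≃ Polynomial F) (𝒰 : Ultrafilter ℕ) (h𝒰 : ↑𝒰 ≤ (atTop : Filter ℕ))
    {r : ℕ} (hr : 0 < r) (C : Fin r → Set (Polynomial F)) (χ : Polynomial F → Fin r)
    (hχ : ∀ z, z ∈ C (χ z))
    (S : Finset (Fin r)) (hS : ∀ j ∈ S, GoodC (C j)) :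
    (∃ i : Fin r, ∃ x ∈ C i, ∃ y ∈ C i, ∃ z ∈ C i, x - y = f.eval z) ∨
      ∃ j, j ∉ S ∧ GoodC (C j) := by
  classical
  -- choose one correspondence system per color in S
  have hsys : ∀ j : {j : Fin r // j ∈ S}, ∃ μ : Measure (ℕ → Bool),
      IsProbabilityMeasure μ ∧
      (∀ n : Polynomial F, MeasurePreserving (shiftT e n) μ μ) ∧
      0 < (μ (Acorr e)).toReal ∧
      ∀ s : Polynomial F, μ (Acorr e ∩ (shiftT e (-s) '' Acorr e)) ≠ 0 →
        ∃ x, x ∈ C j.1 ∧ x + s ∈ C j.1 :=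
    fun j => corr_system_exists e 𝒰 h𝒰 (C j.1) (hS j.1 j.2)
  choose μv hprob hpres hpos hpair using hsys
  haveI : ∀ j, IsProbabilityMeasure (μv j) := hprob
  set μ := Measure.pi μv with hμ
  haveI : IsProbabilityMeasure μ := by infer_instance
  set d := (μ (prodA e)).toReal with hd
  have hdpos : 0 < d := by
    rw [hd, hμ, pi_prodA, ENNReal.toReal_prod]
    apply Finset.prod_pos
    intro j _
    exact hpos j
  obtain ⟨m, k, hm, hfol⟩ := hv ({j : Fin r // j ∈ S} → ℕ → Bool) μ (prodT e)
    (fun n => measurable_prodT e n) (prodT_zero e) (fun a b => prodT_add e a b)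
    (fun n => measurePreserving_prodT e (μv := μv) n (fun j => hpres j n))
    (prodA e) (measurableSet_prodA e) (d ^ 2 / 2) (by positivity)
  obtain ⟨L, hL, hLgt⟩ := hfol (fun N => Gdeg N) isFolner_Gdeg
  have hc2 : d ^ 2 / 2 < L := by
    have : (μ (prodA e)).toReal = d := rfl
    rw [this] at hLgt
    linarith
  set c := d ^ 2 / 2 with hcdef
  have hcpos : 0 < c := by positivity
  have hev : ∀ᶠ N in atTop, c <
      (∑ n ∈ Gdeg (F := F) N,
        (μ (prodA e ∩ (prodT e (-(f.eval (m * n + k))) '' prodA e))).toReal)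
        / ((Gdeg (F := F) N).card : ℝ) :=
    hL.eventually (eventually_gt_nhds hc2)
  set P : Polynomial F → Prop :=
    fun n => μ (prodA e ∩ (prodT e (-(f.eval (m * n + k))) '' prodA e)) ≠ 0 with hP
  have hval_le : ∀ n : Polynomial F,
      (μ (prodA e ∩ (prodT e (-(f.eval (m * n + k))) '' prodA e))).toReal ≤ 1 := by
    intro n
    have h1 : μ (prodA e ∩ (prodT e (-(f.eval (m * n + k))) '' prodA e)) ≤ 1 := prob_le_one
    have h2 := ENNReal.toReal_mono ENNReal.one_ne_top h1
    simpa using h2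
  -- counting within a scale
  have hbig : ∀ N : ℕ, (c <
      (∑ n ∈ Gdeg (F := F) N,
        (μ (prodA e ∩ (prodT e (-(f.eval (m * n + k))) '' prodA e))).toReal)
        / ((Gdeg (F := F) N).card : ℝ)) →
      c * ((Gdeg (F := F) N).card : ℝ) < (((Gdeg (F := F) N).filter P).card : ℝ) := by
    intro N hN
    have hcard := card_Gdeg_pos (F := F) N
    rw [lt_div_iff₀ hcard] at hN
    have hsum : (∑ n ∈ Gdeg (F := F) N,
        (μ (prodA e ∩ (prodT e (-(f.eval (m * n + k))) '' prodA e))).toReal)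
        ≤ (((Gdeg (F := F) N).filter P).card : ℝ) := by
      rw [← Finset.sum_filter_add_sum_filter_not (Gdeg (F := F) N) P]
      have hz : ∑ n ∈ (Gdeg (F := F) N).filter (fun n => ¬ P n),
          (μ (prodA e ∩ (prodT e (-(f.eval (m * n + k))) '' prodA e))).toReal = 0 := by
        apply Finset.sum_eq_zero
        intro n hn
        rw [Finset.mem_filter] at hn
        have h3 := not_not.mp hn.2
        rw [h3]
        simp
      rw [hz, add_zero]
      calc ∑ n ∈ (Gdeg (F := F) N).filter P,
            (μ (prodA e ∩ (prodT e (-(f.eval (m * n + k))) '' prodA e))).toReal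
          ≤ ∑ _n ∈ (Gdeg (F := F) N).filter P, (1:ℝ) :=
            Finset.sum_le_sum (fun n _ => hval_le n)
        _ = (((Gdeg (F := F) N).filter P).card : ℝ) := by simp
    linarith
  -- pigeonhole over colors at one scale
  have hpigeon : ∀ N : ℕ,
      c * ((Gdeg (F := F) N).card : ℝ) < (((Gdeg (F := F) N).filter P).card : ℝ) →
      ∃ j : Fin r, (c / r) * ((Gdeg (F := F) N).card : ℝ)
        ≤ (((Gdeg (F := F) N).filter (fun n => P n ∧ χ (m * n + k) = j)).card : ℝ) := by
    intro N hN
    by_contra hcon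
    push_neg at hcon
    have hsplit : (((Gdeg (F := F) N).filter P).card : ℝ)
        = ∑ j : Fin r, ((((Gdeg (F := F) N).filter P).filter
            (fun n => χ (m * n + k) = j)).card : ℝ) := by
      rw [← Nat.cast_sum]
      congr 1
      exact Finset.card_eq_sum_card_fiberwise (fun n _ => Finset.mem_univ (χ (m * n + k)))
    have heach : ∀ j : Fin r, (((Gdeg (F := F) N).filter P).filter
        (fun n => χ (m * n + k) = j)).card
        = ((Gdeg (F := F) N).filter (fun n => P n ∧ χ (m * n + k) = j)).card := by
      intro j
      rw [Finset.filter_filter]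
    have hlt : (((Gdeg (F := F) N).filter P).card : ℝ)
        < (r : ℝ) * ((c / r) * ((Gdeg (F := F) N).card : ℝ)) := by
      rw [hsplit]
      calc ∑ j : Fin r, ((((Gdeg (F := F) N).filter P).filter
              (fun n => χ (m * n + k) = j)).card : ℝ)
          < ∑ _j : Fin r, (c / r) * ((Gdeg (F := F) N).card : ℝ) := by
            apply Finset.sum_lt_sum_of_nonempty
            · exact Finset.univ_nonempty_iff.mpr (Fin.pos_iff_nonempty.mp hr)
            · intro j _
              rw [heach j]
              exact hcon j
        _ = (r : ℝ) * ((c / r) * ((Gdeg (F := F) N).card : ℝ)) := by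
            rw [Finset.sum_const, Finset.card_univ, Fintype.card_fin, nsmul_eq_mul]
    have hrne : (r : ℝ) ≠ 0 := by exact_mod_cast hr.ne'
    rw [show (r : ℝ) * ((c / r) * ((Gdeg (F := F) N).card : ℝ))
        = c * ((Gdeg (F := F) N).card : ℝ) by field_simp] at hlt
    linarith
  -- a fixed color receiving frequent large counts
  have hkey : ∀ᶠ N in atTop, ∃ j : Fin r, (c / r) * ((Gdeg (F := F) N).card : ℝ)
      ≤ (((Gdeg (F := F) N).filter (fun n => P n ∧ χ (m * n + k) = j)).card : ℝ) :=
    hev.mono (fun N hN => hpigeon N (hbig N hN))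
  have hjstar : ∃ j : Fin r, ∃ᶠ N in atTop, (c / r) * ((Gdeg (F := F) N).card : ℝ)
      ≤ (((Gdeg (F := F) N).filter (fun n => P n ∧ χ (m * n + k) = j)).card : ℝ) := by
    by_contra hcon
    have hcon' : ∀ j : Fin r, ∀ᶠ N in atTop,
        ¬ ((c / r) * ((Gdeg (F := F) N).card : ℝ)
          ≤ (((Gdeg (F := F) N).filter (fun n => P n ∧ χ (m * n + k) = j)).card : ℝ)) :=
      fun j => Filter.not_frequently.mp (fun hf => hcon ⟨j, hf⟩)
    have hcon2 := Filter.eventually_all.mpr hcon'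
    obtain ⟨N, hN1, hN2⟩ := (hkey.and hcon2).exists
    obtain ⟨j, hj⟩ := hN1
    exact hN2 j hj
  obtain ⟨js, hjs⟩ := hjstar
  by_cases hjS : js ∈ S
  · -- solution
    left
    obtain ⟨N, hN⟩ := hjs.exists
    have hpos' : 0 < (((Gdeg (F := F) N).filter
        (fun n => P n ∧ χ (m * n + k) = js)).card : ℝ) := by
      refine lt_of_lt_of_le ?_ hN
      have := card_Gdeg_pos (F := F) N
      positivity
    have hne : ((Gdeg (F := F) N).filter (fun n => P n ∧ χ (m * n + k) = js)).Nonempty := by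
      rw [← Finset.card_pos]
      exact_mod_cast hpos'
    obtain ⟨n, hn⟩ := hne
    rw [Finset.mem_filter] at hn
    obtain ⟨-, hPn, hχn⟩ := hn
    have hfac : μv ⟨js, hjS⟩ (Acorr e ∩ (shiftT e (-(f.eval (m * n + k))) '' Acorr e)) ≠ 0 := by
      intro h0
      apply hPn
      rw [hμ, pi_prodA_event]
      exact Finset.prod_eq_zero (Finset.mem_univ ⟨js, hjS⟩) h0
    obtain ⟨x, hx1, hx2⟩ := hpair ⟨js, hjS⟩ (f.eval (m * n + k)) hfac
    refine ⟨js, x + f.eval (m * n + k), hx2, x, hx1, m * n + k, ?_, by ring⟩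
    rw [← hχn]
    exact hχ _
  · -- a new good color
    right
    refine ⟨js, hjS, ?_⟩
    set dm := m.natDegree with hdm
    set q : ℝ := (Fintype.card F : ℝ) with hq
    have hqpos : (0:ℝ) < q := by
      rw [hq]
      exact_mod_cast Fintype.card_pos
    refine ⟨c / r / q ^ dm, by positivity, k, ?_⟩
    intro N₀
    obtain ⟨N, hNge, hNcard⟩ := Filter.frequently_atTop.mp hjs N₀
    refine ⟨N + dm, le_trans hNge (Nat.le_add_right _ _), ?_⟩
    set D := (Gdeg (F := F) N).filter (fun n => P n ∧ χ (m * n + k) = js) with hD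
    have himg : ∀ n ∈ D, m * n + k ∈ (coset (N + dm) k).filter (· ∈ C js) := by
      intro n hn
      rw [hD, Finset.mem_filter] at hn
      rw [Finset.mem_filter]
      constructor
      · rw [coset]
        exact Finset.mem_image_of_mem _ (mul_mem_Gdeg_shift hm hn.1)
      · have := hχ (m * n + k)
        rw [hn.2.2] at this
        exact this
    have hinj : Set.InjOn (fun n => m * n + k) D := by
      intro a _ b _ hab
      simp only at hab
      have := add_right_cancel hab
      exact mul_left_cancel₀ hm this
    have hcard2 : (D.card : ℝ) ≤ (((coset (N + dm) k).filter (· ∈ C js)).card : ℝ) := by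
      exact_mod_cast Finset.card_le_card_of_injOn _ himg hinj
    have harith : c / r / q ^ dm * ((Gdeg (F := F) (N + dm)).card : ℝ)
        = (c / r) * ((Gdeg (F := F) N).card : ℝ) := by
      rw [card_Gdeg, card_Gdeg, hq]
      push_cast
      rw [pow_add]
      field_simp
    rw [harith]
    exact le_trans hNcard hcard2

lemma main_rec (f : Polynomial (Polynomial F)) (hv : PropV f)
    (e : ℕ ≃ Polynomial F) (𝒰 : Ultrafilter ℕ) (h𝒰 : ↑𝒰 ≤ (atTop : Filter ℕ))
    {r : ℕ} (hr : 0 < r) (C : Fin r → Set (Polynomial F)) (χ : Polynomial F → Fin r)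
    (hχ : ∀ z, z ∈ C (χ z)) :
    ∀ (t : ℕ) (S : Finset (Fin r)), (∀ j ∈ S, GoodC (C j)) → r ≤ S.card + t →
    ∃ i : Fin r, ∃ x ∈ C i, ∃ y ∈ C i, ∃ z ∈ C i, x - y = f.eval z := by
  intro t
  induction t with
  | zero =>
      intro S hS hcard
      rcases main_step f hv e 𝒰 h𝒰 hr C χ hχ S hS with hsol | ⟨j, hjS, _⟩
      · exact hsol
      · exfalso
        apply hjS
        have : S = Finset.univ := by
          apply Finset.eq_univ_of_card
          have h1 := Finset.card_le_univ S
          simp only [Finset.card_univ, Fintype.card_fin] at h1 ⊢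
          omega
        rw [this]
        exact Finset.mem_univ _
  | succ t ih =>
      intro S hS hcard
      rcases main_step f hv e 𝒰 h𝒰 hr C χ hχ S hS with hsol | ⟨j, hjS, hjgood⟩
      · exact hsol
      · apply ih (insert j S)
        · intro j' hj'
          rcases Finset.mem_insert.mp hj' with h | h
          · rwa [h]
          · exact hS j' h
        · rw [Finset.card_insert_of_notMem hjS]
          omega

end Main
end PVPAux


/-- If `f ∈ 𝒵[n]` satisfies property (v), then for every finite partition
`𝒵 = C₁ ∪ … ∪ C_r` there are `i` and `x, y, z ∈ C_i` with `x − y = f(z)`. -/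
theorem propV_implies_partition {F : Type*} [Field F] [Fintype F]
    (f : Polynomial (Polynomial F)) (hv : PropV f) :
    ∀ (r : ℕ) (C : Fin r → Set (Polynomial F)),
      (∀ z : Polynomial F, ∃ i : Fin r, z ∈ C i) →
      ∃ i : Fin r, ∃ x ∈ C i, ∃ y ∈ C i, ∃ z ∈ C i, x - y = f.eval z := by
  intro r C hcover
  have hr : 0 < r := by
    obtain ⟨i, -⟩ := hcover 0
    exact i.pos
  haveI : Countable (Polynomial F) := by
    haveI : Countable (AddMonoidAlgebra F ℕ) := by
      exact Function.Injective.countable AddMonoidAlgebra.coeff_injective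
    exact Function.Injective.countable (f := fun p : Polynomial F => p.toFinsupp)
      (fun a b h => Polynomial.toFinsupp_injective h)
  obtain ⟨dI⟩ := nonempty_denumerable (Polynomial F)
  let e : ℕ ≃ Polynomial F := (@Denumerable.eqv (Polynomial F) dI).symm
  have h𝒰 : ↑(Ultrafilter.of (atTop : Filter ℕ)) ≤ (atTop : Filter ℕ) := Ultrafilter.of_le _
  choose χ hχ using hcover
  exact PVPAux.main_rec f hv e (Ultrafilter.of atTop) h𝒰 hr C χ hχ r ∅
    (by simp) (by simp)

end
end

section
/- The image of the additive map 𝒯 → 𝒯 given by x ↦ x − t^{q−1}·x^q (where x^q is the q-power Frobenius descended to 𝒯 and t^{q−1}· denotes multiplication by t^{q−1} ∈ 𝒵) equals the kernel of the additive group homomorphism 𝒯 → 𝔽, x ↦ x_{−1}, i.e., it equals {x ∈ 𝒯 : the coefficient of t^{−1} of x is 0}. In particular, this image is an additive subgroup of index q in 𝒯. -/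
open Polynomial

noncomputable section

/-- The element `t ∈ 𝓡 = 𝔽((t⁻¹))`, realized in `LaurentSeries F = HahnSeries ℤ F`, where the
series variable stands for `t⁻¹` (so `t` itself is the single term with exponent `-1`, and the
coefficient `x_{-i}` of `t^{-i}` is the Hahn series coefficient at the exponent `i`). -/
def tL (F : Type) [Field F] : LaurentSeries F := HahnSeries.single (-1 : ℤ) (1 : F)

/-- The copy of `𝒵 = 𝔽[t]` inside `𝓡 = 𝔽((t⁻¹))`, as an additive subgroup: the range of
evaluation of polynomials at `t`. -/
def ZS (F : Type) [Field F] : AddSubgroup (LaurentSeries F) :=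
  AddMonoidHom.range
    ((Polynomial.aeval (tL F) : Polynomial F →ₐ[F] LaurentSeries F)).toRingHom.toAddMonoidHom

/-- The "torus" `𝒯 = 𝓡/𝒵`. -/
abbrev TT (F : Type) [Field F] := LaurentSeries F ⧸ ZS F

/-- Elements of `𝒵` (polynomials in `t`) have vanishing coefficients at all negative powers
of `t`. -/
lemma aeval_tL_coeff_pos (F : Type) [Field F] (u : Polynomial F) (i : ℤ) (hi : 0 < i) :
    ((Polynomial.aeval (tL F)) u : LaurentSeries F).coeff i = 0 := by
  induction u using Polynomial.induction_on' with
  | add p q hp hq => simp [map_add, hp, hq]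
  | monomial n a =>
      have h1 : (Polynomial.aeval (tL F)) (Polynomial.monomial n a)
          = HahnSeries.single (-(n : ℤ)) a := by
        simp only [Polynomial.aeval_monomial, tL, HahnSeries.single_pow,
          HahnSeries.algebraMap_apply, HahnSeries.C_apply, HahnSeries.single_mul_single,
          one_pow, mul_one, Algebra.algebraMap_self, RingHom.id_apply, zero_add, smul_neg,
          nsmul_eq_mul, Nat.cast_id, mul_neg]
        have h2 : (algebraMap F (LaurentSeries F)) a = HahnSeries.single (0:ℤ) a := by
          rw [HahnSeries.algebraMap_apply']
          simp [PowerSeries.algebraMap_apply, HahnSeries.ofPowerSeries_C, HahnSeries.C_apply]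
        rw [h2, HahnSeries.single_mul_single, zero_add, mul_one]
      rw [h1, HahnSeries.coeff_single_of_ne]
      omega

/-- The coefficient `x ↦ x_{-i}` of `t^{-i}` (for `i ≥ 1`), as an additive homomorphism
`𝒯 → 𝔽`; it is well defined since elements of `𝒵` have no negative powers of `t`. -/
def coeffT (F : Type) [Field F] (i : ℤ) (hi : 0 < i) : TT F →+ F :=
  QuotientAddGroup.lift (ZS F)
    { toFun := fun x : LaurentSeries F => x.coeff i
      map_zero' := rfl
      map_add' := fun _ _ => rfl }
    (by rintro x ⟨u, rfl⟩; exact aeval_tL_coeff_pos F u i hi)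



/-! ### Auxiliary lemmas -/

lemma isPWO_of_bddBelow' (s : Set ℤ) (N : ℤ) (h : ∀ i ∈ s, N ≤ i) : s.IsPWO :=
  Set.IsWF.isPWO (BddBelow.wellFoundedOn_lt ⟨N, fun i hi => h i hi⟩)

lemma isPWO_inter_Iio_finite' (s : Set ℤ) (hs : s.IsPWO) (N : ℤ) : (s ∩ Set.Iio N).Finite := by
  rcases (s ∩ Set.Iio N).eq_empty_or_nonempty with he | hne
  · simp [he]
  · have hwf : (s ∩ Set.Iio N).IsWF := (hs.mono Set.inter_subset_left).isWF
    refine (Set.finite_Icc (hwf.min hne) (N - 1)).subset fun a ha => ?_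
    exact ⟨hwf.min_le hne ha, by have := ha.2; simp only [Set.mem_Iio] at this; omega⟩

section Aux

variable {F : Type} [Field F]

lemma mul_coeff_eq_zero' {x y : LaurentSeries F} {N M i : ℤ} (hx : ∀ j < N, x.coeff j = 0)
    (hy : ∀ j < M, y.coeff j = 0) (hi : i < N + M) : (x * y).coeff i = 0 := by
  rw [HahnSeries.coeff_mul]
  refine Finset.sum_eq_zero fun ij hij => ?_
  rw [Finset.mem_addAntidiagonal] at hij
  obtain ⟨h1, h2, h3⟩ := hij
  by_cases hc : ij.1 < N
  · rw [hx _ hc, zero_mul]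
  · rw [hy _ (by omega), mul_zero]

lemma pow_coeff_eq_zero' {x : LaurentSeries F} {N : ℤ} (hx : ∀ j < N, x.coeff j = 0) :
    ∀ (n : ℕ), 1 ≤ n → ∀ i : ℤ, i < n * N → (x ^ n).coeff i = 0 := by
  intro n
  induction n with
  | zero => omega
  | succ m ih =>
      intro _ i hi
      rcases Nat.eq_zero_or_pos m with hm | hm
      · subst hm; simpa using hx i (by push_cast at hi ⊢; omega)
      · have : ∀ j < (m : ℤ) * N, (x ^ m).coeff j = 0 := fun j hj => ih hm j hj
        rw [pow_succ]
        refine mul_coeff_eq_zero' this hx ?_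
        have he : ((m : ℤ) + 1) * N = (m : ℤ) * N + N := by ring
        push_cast at hi; omega

variable [Fintype F]

lemma card_pos'' : 0 < Fintype.card F := Fintype.card_pos

lemma hahn_add_pow_card (u v : LaurentSeries F) :
    (u + v) ^ Fintype.card F = u ^ Fintype.card F + v ^ Fintype.card F := by
  let p := ringChar F
  haveI hcF : CharP F p := ringChar.charP F
  have hp : p.Prime := CharP.char_is_prime F p
  haveI : Fact p.Prime := ⟨hp⟩
  obtain ⟨n, -, hcard⟩ := FiniteField.card F p
  haveI : CharP (LaurentSeries F) p :=
    charP_of_injective_algebraMap (algebraMap F (LaurentSeries F)).injective p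
  rw [hcard]
  exact add_pow_char_pow _ _ _ _

lemma single_pow_card (a : ℤ) (c : F) :
    (HahnSeries.single a c : LaurentSeries F) ^ Fintype.card F
      = HahnSeries.single ((Fintype.card F : ℤ) * a) c := by
  rw [HahnSeries.single_pow, FiniteField.pow_card, nsmul_eq_mul]

lemma frob_coeff_finite (s : Finset ℤ) : ∀ x : LaurentSeries F, x.support ⊆ ↑s → ∀ j : ℤ,
    (x ^ Fintype.card F).coeff j
      = if (Fintype.card F : ℤ) ∣ j then x.coeff (j / (Fintype.card F : ℤ)) else 0 := by
  classical
  induction s using Finset.induction_on with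
  | empty =>
      intro x hx j
      have hx0 : x = 0 := by
        ext i
        by_contra hc
        exact absurd (hx hc) (by simp)
      subst hx0
      rw [zero_pow (card_pos'' (F := F)).ne']
      simp
  | @insert a s ha ih =>
      intro x hx j
      set c := x.coeff a with hc
      set y := x - HahnSeries.single a c with hy
      have hysupp : y.support ⊆ ↑s := by
        intro i hi
        simp only [hy, HahnSeries.mem_support, HahnSeries.coeff_sub] at hi
        by_cases hia : i = a
        · subst hia; simp [hc] at hi
        · have : x.coeff i ≠ 0 := by
            rwa [HahnSeries.coeff_single_of_ne hia, sub_zero] at hi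
          have := hx this
          simp only [Finset.coe_insert, Set.mem_insert_iff] at this
          tauto
      have hxeq : x = HahnSeries.single a c + y := by rw [hy]; ring
      have hsingle : ∀ j : ℤ, ((HahnSeries.single a c : LaurentSeries F) ^ Fintype.card F).coeff j
          = if (Fintype.card F : ℤ) ∣ j
            then (HahnSeries.single a c : LaurentSeries F).coeff (j / (Fintype.card F : ℤ))
            else 0 := by
        intro j
        rw [single_pow_card, HahnSeries.coeff_single]
        have hq : (0:ℤ) < (Fintype.card F : ℤ) := by exact_mod_cast card_pos'' (F := F)
        by_cases hj : j = (Fintype.card F : ℤ) * a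
        · subst hj
          rw [if_pos rfl, if_pos (Dvd.intro a rfl), Int.mul_ediv_cancel_left _ hq.ne',
            HahnSeries.coeff_single_same]
        · rw [if_neg hj]
          by_cases hd : (Fintype.card F : ℤ) ∣ j
          · obtain ⟨m, rfl⟩ := hd
            rw [if_pos (Dvd.intro m rfl), Int.mul_ediv_cancel_left _ hq.ne',
              HahnSeries.coeff_single_of_ne]
            intro hma
            exact hj (by rw [hma])
          · rw [if_neg hd]
      rw [hxeq, hahn_add_pow_card]
      simp only [HahnSeries.coeff_add]
      rw [hsingle j, ih y hysupp j]
      by_cases hd : (Fintype.card F : ℤ) ∣ j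
      · simp [hd]
      · simp [hd]

lemma frob_coeff (x : LaurentSeries F) (j : ℤ) :
    (x ^ Fintype.card F).coeff j
      = if (Fintype.card F : ℤ) ∣ j then x.coeff (j / (Fintype.card F : ℤ)) else 0 := by
  classical
  set q := Fintype.card F with hqdef
  have hq1 : 1 ≤ q := card_pos'' (F := F)
  set N : ℤ := max (j + 1) 1 with hN
  set xlo : LaurentSeries F :=
    ⟨fun i => if i < N then x.coeff i else 0, by
      refine (x.isPWO_support.mono ?_)
      intro i hi
      simp only [Function.mem_support] at hi
      by_cases h : i < N
      · simpa [h] using hi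
      · simp [h] at hi⟩ with hxlo
  have hxlocoeff : ∀ i, xlo.coeff i = if i < N then x.coeff i else 0 := fun i => rfl
  set xhi := x - xlo with hxhi
  have hxhicoeff : ∀ i, xhi.coeff i = if i < N then 0 else x.coeff i := by
    intro i
    rw [hxhi, HahnSeries.coeff_sub, hxlocoeff]
    by_cases h : i < N <;> simp [h]
  have hxhi0 : ∀ i < N, xhi.coeff i = 0 := fun i hi => by rw [hxhicoeff, if_pos hi]
  have hxsplit : x = xlo + xhi := by rw [hxhi]; ring
  have hhi : (xhi ^ q).coeff j = 0 := by
    refine pow_coeff_eq_zero' hxhi0 q hq1 j ?_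
    have : (1:ℤ) * N ≤ (q:ℤ) * N := by
      apply mul_le_mul_of_nonneg_right _ (by omega : (0:ℤ) ≤ N)
      exact_mod_cast hq1
    omega
  have hfin : xlo.support.Finite := by
    refine (isPWO_inter_Iio_finite' x.support x.isPWO_support N).subset ?_
    intro i hi
    simp only [HahnSeries.mem_support, hxlocoeff] at hi
    by_cases h : i < N
    · rw [if_pos h] at hi; exact ⟨hi, h⟩
    · rw [if_neg h] at hi; exact absurd rfl hi
  have hlo := frob_coeff_finite hfin.toFinset xlo (by simp) j
  have main : (x ^ q).coeff j = (xlo ^ q).coeff j := by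
    rw [hxsplit, hahn_add_pow_card, HahnSeries.coeff_add, hhi, add_zero]
  rw [main, hlo]
  by_cases hd : (q:ℤ) ∣ j
  · rw [if_pos hd, if_pos hd, hxlocoeff]
    obtain ⟨m, rfl⟩ := hd
    have hq0 : (0:ℤ) < (q:ℤ) := by exact_mod_cast hq1
    rw [Int.mul_ediv_cancel_left _ hq0.ne']
    have hmN : m < N := by
      by_contra hcon
      push_neg at hcon
      have h1 : (1:ℤ) ≤ m := le_trans (le_max_right _ _) hcon
      have key : m ≤ (q:ℤ) * m := le_mul_of_one_le_left (by omega) (by exact_mod_cast hq1)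
      omega
    rw [if_pos hmN]
  · rw [if_neg hd, if_neg hd]

end Aux

/-! ### The recursive preimage construction -/

def gg {F : Type} [Field F] (q : ℕ) (u : ℤ → F) (i : ℕ) : F :=
  if h : 2 ≤ i ∧ 2 ≤ q ∧ q ∣ (i - 1) then
    u i + gg q u ((i - 1) / q + 1)
  else if 2 ≤ i then u i else 0
termination_by i
decreasing_by
  obtain ⟨h2, hq2, hdvd⟩ := h
  have hge : q ≤ i - 1 := Nat.le_of_dvd (by omega) hdvd
  have h3 : (i-1)/q ≤ (i-1)/2 := Nat.div_le_div_left (by omega) (by omega)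
  omega

section Rec

variable {F : Type} [Field F]

lemma gg_of_lt (q : ℕ) (u : ℤ → F) (i : ℕ) (h : i < 2) : gg q u i = 0 := by
  rw [gg]
  simp only [dif_neg (by omega : ¬(2 ≤ i ∧ 2 ≤ q ∧ q ∣ (i-1))), if_neg (by omega : ¬ 2 ≤ i)]

lemma gg_eq (q : ℕ) (u : ℤ → F) (i : ℕ) (h2 : 2 ≤ i) (hq : 2 ≤ q) :
    gg q u i = u i + (if q ∣ (i - 1) then gg q u ((i - 1) / q + 1) else 0) := by
  rw [gg]
  by_cases hd : q ∣ (i - 1)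
  · rw [dif_pos ⟨h2, hq, hd⟩, if_pos hd]
  · rw [dif_neg (by tauto), if_pos h2, if_neg hd, add_zero]

def XX (q : ℕ) (u : ℤ → F) : LaurentSeries F :=
  ⟨fun i => if 0 < i then gg q u i.toNat else 0, by
    refine isPWO_of_bddBelow' _ 1 fun i hi => ?_
    simp only [Function.mem_support] at hi
    by_cases h : 0 < i
    · omega
    · simp [h] at hi⟩

lemma XX_coeff (q : ℕ) (u : ℤ → F) (i : ℤ) :
    (XX q u).coeff i = if 0 < i then gg q u i.toNat else 0 := rfl

lemma XX_spec (q : ℕ) (hq : 2 ≤ q) (u : ℤ → F) (hu1 : u 1 = 0)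
    (hfrob : ∀ j : ℤ, ((XX q u) ^ q).coeff j
      = if (q:ℤ) ∣ j then (XX q u).coeff (j / (q:ℤ)) else 0) (i : ℤ) :
    (XX q u).coeff i - ((XX q u) ^ q).coeff (i + ((q - 1 : ℕ) : ℤ))
      = if 1 ≤ i then u i else 0 := by
  have hq0 : (0:ℤ) < (q:ℤ) := by exact_mod_cast (by omega : 0 < q)
  have hk : ((q - 1 : ℕ) : ℤ) = (q:ℤ) - 1 := by
    rw [Nat.cast_sub (by omega)]; norm_num
  rw [hfrob, hk]
  have hdvd_iff : (q:ℤ) ∣ (i + ((q:ℤ) - 1)) ↔ (q:ℤ) ∣ (i - 1) := by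
    constructor
    · intro h
      have := dvd_sub h (dvd_refl (q:ℤ))
      rw [show i - 1 = i + ((q:ℤ) - 1) - q by ring]; exact this
    · intro h
      have := dvd_add h (dvd_refl (q:ℤ))
      rw [show i + ((q:ℤ) - 1) = i - 1 + q by ring]; exact this
  rcases le_or_gt i 0 with hi0 | hipos
  · rw [XX_coeff, if_neg (show ¬ (0:ℤ) < i by omega), if_neg (show ¬ (1:ℤ) ≤ i by omega),
      zero_sub, neg_eq_zero]
    by_cases hd : (q:ℤ) ∣ (i + ((q:ℤ) - 1))
    · rw [if_pos hd]
      obtain ⟨m, hm⟩ := hdvd_iff.mp hd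
      have hdiv : (i + ((q:ℤ) - 1)) / (q:ℤ) = m + 1 := by
        rw [show i + ((q:ℤ) - 1) = (q:ℤ) * (m + 1) by rw [mul_add, mul_one]; omega,
          Int.mul_ediv_cancel_left _ hq0.ne']
      have hm1 : m + 1 ≤ 0 := by nlinarith
      rw [hdiv, XX_coeff, if_neg (by omega)]
    · rw [if_neg hd]
  rcases eq_or_lt_of_le (show (1:ℤ) ≤ i by omega) with hi1 | hi2
  · have hieq : i = 1 := hi1.symm
    subst hieq
    have hd : (q:ℤ) ∣ (1 + ((q:ℤ) - 1)) := ⟨1, by ring⟩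
    rw [if_pos hd, show (1 + ((q:ℤ) - 1)) / (q:ℤ) = 1 by
        rw [show 1 + ((q:ℤ) - 1) = (q:ℤ) * 1 by ring, Int.mul_ediv_cancel_left _ hq0.ne']]
    rw [XX_coeff, if_pos one_pos, show (1:ℤ).toNat = 1 from rfl, gg_of_lt q u 1 (by omega)]
    rw [if_pos le_rfl, hu1, sub_zero]
  · have h2n : 2 ≤ i.toNat := by omega
    have hcast : ((i.toNat : ℤ)) = i := by omega
    rw [XX_coeff, if_pos (by omega : (0:ℤ) < i), gg_eq q u i.toNat h2n hq, hcast,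
      if_pos (show (1:ℤ) ≤ i by omega)]
    by_cases hd : (q:ℤ) ∣ (i + ((q:ℤ) - 1))
    · have hdi : (q:ℤ) ∣ (i - 1) := hdvd_iff.mp hd
      obtain ⟨m, hm⟩ := hdi
      have hm1 : 1 ≤ m := by nlinarith
      have hdivZ : (i + ((q:ℤ) - 1)) / (q:ℤ) = m + 1 := by
        rw [show i + ((q:ℤ) - 1) = (q:ℤ) * (m + 1) by rw [mul_add, mul_one]; omega,
          Int.mul_ediv_cancel_left _ hq0.ne']
      have hdN : q ∣ (i.toNat - 1) := by
        have : ((q:ℤ)) ∣ ((i.toNat - 1 : ℕ) : ℤ) := by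
          rw [show ((i.toNat - 1 : ℕ) : ℤ) = i - 1 by omega]; exact ⟨m, hm⟩
        exact_mod_cast this
      have hmt : ((m.toNat : ℤ)) = m := by omega
      have hdivN : (i.toNat - 1) / q = m.toNat := by
        have hqm : (i.toNat - 1 : ℕ) = q * m.toNat := by
          have hcq : ((i.toNat - 1 : ℕ) : ℤ) = ((q * m.toNat : ℕ) : ℤ) := by
            push_cast [hmt]; omega
          exact_mod_cast hcq
        rw [hqm, Nat.mul_div_cancel_left _ (by omega : 0 < q)]
      have hmt1 : (m + 1).toNat = (i.toNat - 1) / q + 1 := by rw [hdivN]; omega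
      rw [if_pos hd, if_pos hdN, hdivZ, XX_coeff, if_pos (by omega : (0:ℤ) < m + 1), hmt1]
      ring
    · have hdi : ¬ (q:ℤ) ∣ (i - 1) := fun h => hd (hdvd_iff.mpr h)
      have hdN : ¬ q ∣ (i.toNat - 1) := by
        intro h
        apply hdi
        have : ((q:ℤ)) ∣ ((i.toNat - 1 : ℕ) : ℤ) := by exact_mod_cast h
        rwa [show ((i.toNat - 1 : ℕ) : ℤ) = i - 1 by omega] at this
      rw [if_neg hd, if_neg hdN, add_zero, sub_zero]

end Rec

/-! ### More glue -/

section Glue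

variable {F : Type} [Field F]

lemma aeval_monomial_tL (n : ℕ) (a : F) :
    (Polynomial.aeval (tL F)) (Polynomial.monomial n a) = HahnSeries.single (-(n : ℤ)) a := by
  simp only [Polynomial.aeval_monomial, tL, HahnSeries.single_pow,
    HahnSeries.algebraMap_apply, HahnSeries.C_apply, HahnSeries.single_mul_single,
    one_pow, mul_one, Algebra.algebraMap_self, RingHom.id_apply, zero_add, smul_neg,
    nsmul_eq_mul, Nat.cast_id, mul_neg]
  have h2 : (algebraMap F (LaurentSeries F)) a = HahnSeries.single (0:ℤ) a := by
    rw [HahnSeries.algebraMap_apply']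
    simp [PowerSeries.algebraMap_apply, HahnSeries.ofPowerSeries_C, HahnSeries.C_apply]
  rw [h2, HahnSeries.single_mul_single, zero_add, mul_one]

lemma single_mem_ZS (a : ℤ) (ha : a ≤ 0) (c : F) :
    (HahnSeries.single a c : LaurentSeries F) ∈ ZS F := by
  refine ⟨Polynomial.monomial (-a).toNat c, ?_⟩
  show (Polynomial.aeval (tL F)) (Polynomial.monomial (-a).toNat c) = _
  have hcast : (-(((-a).toNat : ℕ) : ℤ)) = a := by omega
  rw [aeval_monomial_tL, hcast]

lemma low_mem_ZS (x : LaurentSeries F) (hfin : x.support.Finite)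
    (hsupp : ∀ i ∈ x.support, i ≤ 0) : x ∈ ZS F := by
  classical
  have key : ∀ s : Finset ℤ, ∀ x : LaurentSeries F, x.support ⊆ ↑s →
      (∀ i ∈ x.support, i ≤ 0) → x ∈ ZS F := by
    intro s
    induction s using Finset.induction_on with
    | empty =>
        intro x hx _
        have : x = 0 := by
          ext i
          by_contra hc
          exact absurd (hx hc) (by simp)
        rw [this]; exact zero_mem _
    | @insert a s ha ih =>
        intro x hx hs
        set c := x.coeff a with hc
        set y := x - HahnSeries.single a c with hy
        have hysupp : y.support ⊆ ↑s := by
          intro i hi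
          simp only [hy, HahnSeries.mem_support, HahnSeries.coeff_sub] at hi
          by_cases hia : i = a
          · subst hia; simp [hc] at hi
          · have : x.coeff i ≠ 0 := by
              rwa [HahnSeries.coeff_single_of_ne hia, sub_zero] at hi
            have := hx this
            simp only [Finset.coe_insert, Set.mem_insert_iff] at this
            tauto
        have hys : ∀ i ∈ y.support, i ≤ 0 := by
          intro i hi
          simp only [hy, HahnSeries.mem_support, HahnSeries.coeff_sub] at hi
          by_cases hia : i = a
          · subst hia; simp [hc] at hi
          · have : x.coeff i ≠ 0 := by
              rwa [HahnSeries.coeff_single_of_ne hia, sub_zero] at hi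
            exact hs i this
        have hmem : (HahnSeries.single a c : LaurentSeries F) ∈ ZS F := by
          by_cases hc0 : c = 0
          · rw [hc0]; simp only [map_zero]; exact zero_mem _
          · refine single_mem_ZS a ?_ c
            exact hs a (by simpa [hc] using hc0)
        have : x = HahnSeries.single a c + y := by rw [hy]; ring
        rw [this]
        exact add_mem hmem (ih y hysupp hys)
  exact key hfin.toFinset x (by simp) hsupp

lemma coeffT_mk (i : ℤ) (hi : 0 < i) (z : LaurentSeries F) :
    coeffT F i hi (QuotientAddGroup.mk' (ZS F) z) = z.coeff i := rfl

variable [Fintype F]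

lemma tL_pow_k : tL F ^ (Fintype.card F - 1)
    = HahnSeries.single (-(((Fintype.card F - 1 : ℕ)) : ℤ)) (1 : F) := by
  rw [tL, HahnSeries.single_pow, one_pow]
  congr 1
  simp [nsmul_eq_mul]

lemma shift_coeff (z : LaurentSeries F) (i : ℤ) :
    (tL F ^ (Fintype.card F - 1) * z).coeff i
      = z.coeff (i + ((Fintype.card F - 1 : ℕ) : ℤ)) := by
  rw [tL_pow_k]
  have h : i = (i + ((Fintype.card F - 1 : ℕ) : ℤ)) + (-(((Fintype.card F - 1 : ℕ)) : ℤ)) := by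
    ring
  rw [h, HahnSeries.coeff_single_mul_add, one_mul]
  congr 1
  ring

end Glue

/-- The image of the additive map `𝒯 → 𝒯`, `x ↦ x − t^{q−1}·x^q` (the `q`-power Frobenius
composed with multiplication by `t^{q−1}`, descended to `𝒯`; since the quotient map is
surjective, this image is the set of classes of `x − t^{q−1}·x^q`, `x ∈ 𝓡`) equals the kernel
`{x ∈ 𝒯 : x_{−1} = 0}` of the coefficient homomorphism `x ↦ x_{−1}`. In particular this image
is an additive subgroup of index `q` in `𝒯`. -/
theorem image_frobenius_map_eq_ker_coeff (F : Type) [Field F] [Fintype F] :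
    (Set.range (fun x : LaurentSeries F =>
        QuotientAddGroup.mk' (ZS F) (x - tL F ^ (Fintype.card F - 1) * x ^ Fintype.card F))
      = { y : TT F | coeffT F 1 one_pos y = 0 }) ∧
    ∃ K : AddSubgroup (TT F),
      (K : Set (TT F)) = Set.range (fun x : LaurentSeries F =>
        QuotientAddGroup.mk' (ZS F) (x - tL F ^ (Fintype.card F - 1) * x ^ Fintype.card F)) ∧
      K.index = Fintype.card F := by
  classical
  have hq2 : 2 ≤ Fintype.card F := Fintype.one_lt_card
  have hq0 : (0:ℤ) < (Fintype.card F : ℤ) := by exact_mod_cast (by omega : 0 < Fintype.card F)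
  have hqk : (1:ℤ) + ((Fintype.card F - 1 : ℕ) : ℤ) = (Fintype.card F : ℤ) := by
    rw [Nat.cast_sub (by omega)]; ring
  have hmain : Set.range (fun x : LaurentSeries F =>
        QuotientAddGroup.mk' (ZS F) (x - tL F ^ (Fintype.card F - 1) * x ^ Fintype.card F))
      = { y : TT F | coeffT F 1 one_pos y = 0 } := by
    ext y
    simp only [Set.mem_range, Set.mem_setOf_eq]
    constructor
    · rintro ⟨x, rfl⟩
      rw [coeffT_mk, HahnSeries.coeff_sub, shift_coeff, hqk, frob_coeff,
        if_pos (dvd_refl _), Int.ediv_self hq0.ne', sub_self]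
    · intro hy
      obtain ⟨Y, rfl⟩ := QuotientAddGroup.mk'_surjective (ZS F) y
      rw [coeffT_mk] at hy
      have hfrob := fun j => frob_coeff (XX (Fintype.card F) Y.coeff) j
      have hspec := XX_spec (Fintype.card F) hq2 Y.coeff hy hfrob
      refine ⟨XX (Fintype.card F) Y.coeff, ?_⟩
      have heq : XX (Fintype.card F) Y.coeff
          - tL F ^ (Fintype.card F - 1) * (XX (Fintype.card F) Y.coeff) ^ Fintype.card F
          - Y ∈ ZS F := by
        have hco : ∀ i : ℤ, (XX (Fintype.card F) Y.coeff
            - tL F ^ (Fintype.card F - 1) * (XX (Fintype.card F) Y.coeff) ^ Fintype.card F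
            - Y).coeff i = if 1 ≤ i then 0 else -(Y.coeff i) := by
          intro i
          rw [HahnSeries.coeff_sub, HahnSeries.coeff_sub, shift_coeff, hspec i]
          by_cases h : 1 ≤ i
          · rw [if_pos h, if_pos h]; ring
          · rw [if_neg h, if_neg h]; ring
        refine low_mem_ZS _ ?_ ?_
        · refine (isPWO_inter_Iio_finite' Y.support Y.isPWO_support 1).subset ?_
          intro i hi
          simp only [HahnSeries.mem_support] at hi
          rw [hco i] at hi
          by_cases h : 1 ≤ i
          · rw [if_pos h] at hi; exact absurd rfl hi
          · rw [if_neg h] at hi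
            refine ⟨?_, by simpa using h⟩
            simp only [HahnSeries.mem_support]
            intro h0
            rw [h0] at hi; simp at hi
        · intro i hi
          simp only [HahnSeries.mem_support] at hi
          rw [hco i] at hi
          by_cases h : 1 ≤ i
          · rw [if_pos h] at hi; exact absurd rfl hi
          · omega
      show (QuotientAddGroup.mk' (ZS F)) (XX (Fintype.card F) Y.coeff
              - tL F ^ (Fintype.card F - 1) * (XX (Fintype.card F) Y.coeff) ^ Fintype.card F)
          = (QuotientAddGroup.mk' (ZS F)) Y
      rw [QuotientAddGroup.mk'_apply, QuotientAddGroup.mk'_apply,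
        QuotientAddGroup.eq_iff_sub_mem]
      exact heq
  refine ⟨hmain, ⟨(coeffT F 1 one_pos).ker, ?_, ?_⟩⟩
  · rw [hmain]
    rfl
  · rw [AddSubgroup.index_ker]
    have hsurj : Function.Surjective (coeffT F 1 one_pos) := by
      intro a
      refine ⟨QuotientAddGroup.mk' (ZS F) (HahnSeries.single (1:ℤ) a), ?_⟩
      rw [coeffT_mk, HahnSeries.coeff_single_same]
    rw [AddMonoidHom.range_eq_top_of_surjective _ hsurj, AddSubgroup.card_top,
      Nat.card_eq_fintype_card]

end
end
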